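/- arXiv:2501.11156 — 4 statements merged into one kernel-verified Lean document; each statement's English description precedes it below -/
import Mathlib

section
/- There exists a constant C > 0 such that the following holds. Let Γ = {(aᵢ, bⱼ, c_l) : i + j + l ≤ n} be a generic 3-dimensional half-grid of order n, given by real numbers 0 = a₀ < a₁ < ⋯ < a_n, 0 = b₀ < b₁ < ⋯ < b_n, 0 = c₀ < c₁ < ⋯ < c_n, where generic means: for every plane u·x = 1 with u ∈ ℝ³ having support I ⊆ {1,2,3}, and for all real scalars λ_j for j ∈ {1,2,3} ∖ I, the number of points (x₁, x₂, x₃) ∈ Γ satisfying ∑_{i∈I} uᵢxᵢ = 1 and x_j = λ_j for all j ∉ I is at most |I|. Then for every positive integer k, any finite multiset of planes in ℝ³, none passing through the origin, that covers every point of Γ ∖ {(0,0,0)} at least k times (with multiplicity), has size at least (31/18)·n·k − C·k. -/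
open scoped Classical

/-- `IsOnPlane P p` means the point `p : Fin 3 → ℝ` lies on the plane with coefficients
`P = (u, d)`, i.e. on `{x | u ⬝ x = d}`. -/
def IsOnPlane (P : (Fin 3 → ℝ) × ℝ) (p : Fin 3 → ℝ) : Prop :=
  ∑ i, P.1 i * p i = P.2

namespace Stmt9Aux

def pt3 (a b c : ℕ → ℝ) (t : ℕ × ℕ × ℕ) : Fin 3 → ℝ := ![a t.1, b t.2.1, c t.2.2]

lemma pt3_0 (a b c : ℕ → ℝ) (t : ℕ × ℕ × ℕ) : pt3 a b c t 0 = a t.1 := rfl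
lemma pt3_1 (a b c : ℕ → ℝ) (t : ℕ × ℕ × ℕ) : pt3 a b c t 1 = b t.2.1 := rfl
lemma pt3_2 (a b c : ℕ → ℝ) (t : ℕ × ℕ × ℕ) : pt3 a b c t 2 = c t.2.2 := rfl

def TT (n : ℕ) : Finset (ℕ × ℕ × ℕ) :=
  ((Finset.range (n+1)) ×ˢ (Finset.range (n+1)) ×ˢ (Finset.range (n+1))).filter
    (fun t => t.1 + t.2.1 + t.2.2 ≤ n ∧ t ≠ (0,0,0))

lemma mem_TT {n : ℕ} {t : ℕ × ℕ × ℕ} :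
    t ∈ TT n ↔ t.1 + t.2.1 + t.2.2 ≤ n ∧ ¬(t.1 = 0 ∧ t.2.1 = 0 ∧ t.2.2 = 0) := by
  rcases t with ⟨i, j, l⟩
  simp only [TT, Finset.mem_filter, Finset.mem_product, Finset.mem_range, ne_eq,
    Prod.mk.injEq, not_and]
  constructor
  · rintro ⟨_, h1, h2⟩; exact ⟨h1, by intro hi hj hl; exact h2 hi hj hl⟩
  · rintro ⟨h1, h2⟩; exact ⟨by omega, h1, by intro hi hj; exact h2 hi hj⟩

def DD (n : ℕ) : Finset (ℕ × ℕ × ℕ) :=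
  if 3 ≤ n then
    ((Finset.range (n/3)).image fun s => (s+1, s + n/3, 2*(n/3) - 1 - 2*s)) ∪
    ((Finset.range (n/3 - 1)).image fun s => (n/3 + 1 + s, s+1, 2*(n/3) - 2 - 2*s))
  else ∅

lemma mem_DD {n : ℕ} {d : ℕ × ℕ × ℕ} :
    d ∈ DD n ↔ 3 ≤ n ∧
      ((∃ s < n/3, d = (s+1, s + n/3, 2*(n/3) - 1 - 2*s)) ∨
       (∃ s < n/3 - 1, d = (n/3 + 1 + s, s+1, 2*(n/3) - 2 - 2*s))) := by
  unfold DD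
  split_ifs with h
  · simp only [Finset.mem_union, Finset.mem_image, Finset.mem_range]
    constructor
    · rintro (⟨s, hs, rfl⟩ | ⟨s, hs, rfl⟩)
      · exact ⟨h, Or.inl ⟨s, hs, rfl⟩⟩
      · exact ⟨h, Or.inr ⟨s, hs, rfl⟩⟩
    · rintro ⟨-, (⟨s, hs, rfl⟩ | ⟨s, hs, rfl⟩)⟩
      · exact Or.inl ⟨s, hs, rfl⟩
      · exact Or.inr ⟨s, hs, rfl⟩
  · simp [h]

lemma DD_spec {n : ℕ} {d : ℕ × ℕ × ℕ} (hd : d ∈ DD n) :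
    1 ≤ d.1 ∧ 1 ≤ d.2.1 ∧ 1 ≤ d.2.2 ∧ d.1 + d.2.1 + d.2.2 ≤ n := by
  rw [mem_DD] at hd
  obtain ⟨h3, (⟨s, hs, rfl⟩ | ⟨s, hs, rfl⟩)⟩ := hd <;> simp <;> omega

lemma DD_inj1 {n : ℕ} {d d' : ℕ × ℕ × ℕ} (hd : d ∈ DD n) (hd' : d' ∈ DD n)
    (h : d.1 = d'.1) : d = d' := by
  rw [mem_DD] at hd hd'
  obtain ⟨h3, (⟨s, hs, rfl⟩ | ⟨s, hs, rfl⟩)⟩ := hd <;>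
    obtain ⟨-, (⟨s', hs', rfl⟩ | ⟨s', hs', rfl⟩)⟩ := hd' <;>
    simp_all <;> omega

lemma DD_inj2 {n : ℕ} {d d' : ℕ × ℕ × ℕ} (hd : d ∈ DD n) (hd' : d' ∈ DD n)
    (h : d.2.1 = d'.2.1) : d = d' := by
  rw [mem_DD] at hd hd'
  obtain ⟨h3, (⟨s, hs, rfl⟩ | ⟨s, hs, rfl⟩)⟩ := hd <;>
    obtain ⟨-, (⟨s', hs', rfl⟩ | ⟨s', hs', rfl⟩)⟩ := hd' <;>
    simp_all <;> omega

lemma DD_inj3 {n : ℕ} {d d' : ℕ × ℕ × ℕ} (hd : d ∈ DD n) (hd' : d' ∈ DD n)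
    (h : d.2.2 = d'.2.2) : d = d' := by
  rw [mem_DD] at hd hd'
  obtain ⟨h3, (⟨s, hs, rfl⟩ | ⟨s, hs, rfl⟩)⟩ := hd <;>
    obtain ⟨-, (⟨s', hs', rfl⟩ | ⟨s', hs', rfl⟩)⟩ := hd' <;>
    simp_all <;> omega

lemma DD_card {n : ℕ} : 2*(n/3) - 1 ≤ (DD n).card := by
  by_cases h : 3 ≤ n
  · have hsub : (Finset.range (n/3)).card + (Finset.range (n/3 - 1)).card ≤ (DD n).card := by
      unfold DD
      rw [if_pos h]
      rw [Finset.card_union_of_disjoint]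
      · rw [Finset.card_image_of_injOn (by intro x _ y _ h; have := congrArg Prod.fst h; simpa using this),
            Finset.card_image_of_injOn (by intro x _ y _ h; have := congrArg Prod.fst h; simp at this; omega)]
      · rw [Finset.disjoint_left]
        rintro x hx hx'
        simp only [Finset.mem_image, Finset.mem_range] at hx hx'
        obtain ⟨s, hs, rfl⟩ := hx
        obtain ⟨s', hs', h⟩ := hx'
        have := congrArg Prod.fst h
        simp at this; omega
    simp only [Finset.card_range] at hsub
    -- need card_image ≥ : fix below
    omega
  · have : n / 3 = 0 := by omega
    simp [this]


noncomputable def ww (n : ℕ) (t : ℕ × ℕ × ℕ) : ℝ :=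
  (if t.2.1 = 0 ∧ t.2.2 = 0 then 3⁻¹ else 0) +
  (if t.1 = 0 ∧ t.2.2 = 0 then 3⁻¹ else 0) +
  (if t.1 = 0 ∧ t.2.1 = 0 then 3⁻¹ else 0) +
  (if 1 ≤ t.1 ∧ 1 ≤ t.2.1 ∧ t.2.2 = 0 ∧ t.1 + t.2.1 = n then 6⁻¹ else 0) +
  (if 1 ≤ t.1 ∧ t.2.1 = 0 ∧ 1 ≤ t.2.2 ∧ t.1 + t.2.2 = n then 6⁻¹ else 0) +
  (if t.1 = 0 ∧ 1 ≤ t.2.1 ∧ 1 ≤ t.2.2 ∧ t.2.1 + t.2.2 = n then 6⁻¹ else 0) +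
  (if t ∈ DD n then 3⁻¹ else 0)

lemma ww_nonneg (n : ℕ) (t : ℕ × ℕ × ℕ) : 0 ≤ ww n t := by
  unfold ww; positivity

lemma ww_le_third {n : ℕ} {t : ℕ × ℕ × ℕ} (ht : ¬(t.1 = 0 ∧ t.2.1 = 0 ∧ t.2.2 = 0)) :
    ww n t ≤ 3⁻¹ := by
  rcases t with ⟨i, j, l⟩
  by_cases hD : ((i, j, l) : ℕ × ℕ × ℕ) ∈ DD n
  · obtain ⟨h1, h2, h3, h4⟩ := DD_spec hD
    simp only at h1 h2 h3
    unfold ww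
    simp only [hD, if_true]
    rw [if_neg (by simp; omega), if_neg (by simp; omega), if_neg (by simp; omega),
        if_neg (by simp; omega), if_neg (by simp; omega), if_neg (by simp; omega)]
    norm_num
  · unfold ww
    simp only [hD, if_false]
    simp only at ht ⊢
    split_ifs <;> first | (exfalso; omega) | norm_num

lemma sum_ite_le {X : Type*} (S : Finset X) (p : X → Prop) [DecidablePred p] (v : ℝ) (hv : 0 ≤ v) (m : ℕ)
    (h : (S.filter p).card ≤ m) : (∑ x ∈ S, if p x then v else 0) ≤ m * v := by
  rw [Finset.sum_ite, Finset.sum_const, Finset.sum_const_zero, add_zero, nsmul_eq_mul]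
  exact mul_le_mul_of_nonneg_right (by exact_mod_cast h) hv

lemma sum_ite_ge {X : Type*} (S : Finset X) (p : X → Prop) [DecidablePred p] (v : ℝ) (hv : 0 ≤ v) (m : ℕ)
    (h : m ≤ (S.filter p).card) : (m : ℝ) * v ≤ ∑ x ∈ S, if p x then v else 0 := by
  rw [Finset.sum_ite, Finset.sum_const, Finset.sum_const_zero, add_zero, nsmul_eq_mul]
  exact mul_le_mul_of_nonneg_right (by exact_mod_cast h) hv

lemma card_filter_le_one {X : Type*} {S : Finset X} {p : X → Prop} [DecidablePred p]
    (h : ∀ x ∈ S, p x → ∀ y ∈ S, p y → x = y) : (S.filter p).card ≤ 1 := by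
  apply Finset.card_le_one.2
  intro x hx y hy
  rw [Finset.mem_filter] at hx hy
  exact h x hx.1 hx.2 y hy.1 hy.2

lemma card_filter_eq_zero {X : Type*} {S : Finset X} {p : X → Prop} [DecidablePred p]
    (h : ∀ x ∈ S, ¬ p x) : (S.filter p).card ≤ 0 := by
  rw [Finset.filter_false_of_mem h]; simp

lemma cast_sub_ge (m k : ℕ) : (m:ℝ) - k ≤ ((m - k : ℕ):ℝ) := by
  by_cases h : k ≤ m
  · rw [Nat.cast_sub h]
  · have h1 : m - k = 0 := by omega
    have h2 : (m:ℝ) ≤ (k:ℝ) := by exact_mod_cast (by omega : m ≤ k)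
    rw [h1]
    simp
    linarith

lemma total_ww (n : ℕ) : (31/18 : ℝ) * n - 2 ≤ ∑ t ∈ TT n, ww n t := by
  unfold ww
  rw [Finset.sum_add_distrib, Finset.sum_add_distrib, Finset.sum_add_distrib,
      Finset.sum_add_distrib, Finset.sum_add_distrib, Finset.sum_add_distrib]
  have hA1 : (n : ℝ) * 3⁻¹ ≤ ∑ t ∈ TT n, if t.2.1 = 0 ∧ t.2.2 = 0 then (3:ℝ)⁻¹ else 0 := by
    apply sum_ite_ge _ _ _ (by norm_num)
    calc n = (Finset.range n).card := (Finset.card_range n).symm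
    _ ≤ _ := Finset.card_le_card_of_injOn (fun i => (i+1, 0, 0))
        (by intro i hi
            simp only [Finset.mem_coe, Finset.mem_range] at hi
            simp only [Finset.mem_coe, Finset.mem_filter, mem_TT]
            refine ⟨⟨by omega, by omega⟩, by simp⟩)
        (by intro x _ y _ h; simpa using h)
  have hA2 : (n : ℝ) * 3⁻¹ ≤ ∑ t ∈ TT n, if t.1 = 0 ∧ t.2.2 = 0 then (3:ℝ)⁻¹ else 0 := by
    apply sum_ite_ge _ _ _ (by norm_num)
    calc n = (Finset.range n).card := (Finset.card_range n).symm
    _ ≤ _ := Finset.card_le_card_of_injOn (fun i => (0, i+1, 0))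
        (by intro i hi
            simp only [Finset.mem_coe, Finset.mem_range] at hi
            simp only [Finset.mem_coe, Finset.mem_filter, mem_TT]
            refine ⟨⟨by omega, by omega⟩, by simp⟩)
        (by intro x _ y _ h; simpa using h)
  have hA3 : (n : ℝ) * 3⁻¹ ≤ ∑ t ∈ TT n, if t.1 = 0 ∧ t.2.1 = 0 then (3:ℝ)⁻¹ else 0 := by
    apply sum_ite_ge _ _ _ (by norm_num)
    calc n = (Finset.range n).card := (Finset.card_range n).symm
    _ ≤ _ := Finset.card_le_card_of_injOn (fun i => (0, 0, i+1))
        (by intro i hi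
            simp only [Finset.mem_coe, Finset.mem_range] at hi
            simp only [Finset.mem_coe, Finset.mem_filter, mem_TT]
            refine ⟨⟨by omega, by omega⟩, by simp⟩)
        (by intro x _ y _ h; simpa using h)
  have hF1 : ((n-1 : ℕ) : ℝ) * 6⁻¹ ≤
      ∑ t ∈ TT n, if 1 ≤ t.1 ∧ 1 ≤ t.2.1 ∧ t.2.2 = 0 ∧ t.1 + t.2.1 = n then (6:ℝ)⁻¹ else 0 := by
    apply sum_ite_ge _ _ _ (by norm_num)
    calc n - 1 = (Finset.range (n-1)).card := (Finset.card_range _).symm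
    _ ≤ _ := Finset.card_le_card_of_injOn (fun i => (i+1, n-i-1, 0))
        (by intro i hi
            simp only [Finset.mem_coe, Finset.mem_range] at hi
            simp only [Finset.mem_coe, Finset.mem_filter, mem_TT]
            refine ⟨⟨by omega, by omega⟩, by simp; omega⟩)
        (by intro x _ y _ h; have := congrArg Prod.fst h; simpa using this)
  have hF2 : ((n-1 : ℕ) : ℝ) * 6⁻¹ ≤
      ∑ t ∈ TT n, if 1 ≤ t.1 ∧ t.2.1 = 0 ∧ 1 ≤ t.2.2 ∧ t.1 + t.2.2 = n then (6:ℝ)⁻¹ else 0 := by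
    apply sum_ite_ge _ _ _ (by norm_num)
    calc n - 1 = (Finset.range (n-1)).card := (Finset.card_range _).symm
    _ ≤ _ := Finset.card_le_card_of_injOn (fun i => (i+1, 0, n-i-1))
        (by intro i hi
            simp only [Finset.mem_coe, Finset.mem_range] at hi
            simp only [Finset.mem_coe, Finset.mem_filter, mem_TT]
            refine ⟨⟨by omega, by omega⟩, by simp; omega⟩)
        (by intro x _ y _ h; have := congrArg Prod.fst h; simpa using this)
  have hF3 : ((n-1 : ℕ) : ℝ) * 6⁻¹ ≤
      ∑ t ∈ TT n, if t.1 = 0 ∧ 1 ≤ t.2.1 ∧ 1 ≤ t.2.2 ∧ t.2.1 + t.2.2 = n then (6:ℝ)⁻¹ else 0 := by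
    apply sum_ite_ge _ _ _ (by norm_num)
    calc n - 1 = (Finset.range (n-1)).card := (Finset.card_range _).symm
    _ ≤ _ := Finset.card_le_card_of_injOn (fun i => (0, i+1, n-i-1))
        (by intro i hi
            simp only [Finset.mem_coe, Finset.mem_range] at hi
            simp only [Finset.mem_coe, Finset.mem_filter, mem_TT]
            refine ⟨⟨by omega, by omega⟩, by simp; omega⟩)
        (by intro x _ y _ h; have := congrArg (fun p => p.2.1) h; simpa using this)
  have hD : ((2*(n/3) - 1 : ℕ) : ℝ) * 3⁻¹ ≤
      ∑ t ∈ TT n, if t ∈ DD n then (3:ℝ)⁻¹ else 0 := by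
    apply sum_ite_ge _ _ _ (by norm_num)
    refine DD_card.trans (Finset.card_le_card ?_)
    intro d hd
    obtain ⟨h1, h2, h3, h4⟩ := DD_spec hd
    rw [Finset.mem_filter, mem_TT]
    exact ⟨⟨h4, by omega⟩, hd⟩
  have c1 : ((n-1 : ℕ) : ℝ) ≥ (n : ℝ) - 1 := by
    have := cast_sub_ge n 1; push_cast at this ⊢; linarith
  have c2 : ((2*(n/3) - 1 : ℕ) : ℝ) ≥ 2 * ((n:ℝ) - 2)/3 - 1 := by
    have h3 : 3*(n/3) + 2 ≥ n := by omega
    have h4 : ((2*(n/3) - 1 : ℕ) : ℝ) ≥ ((2*(n/3) : ℕ):ℝ) - 1 := by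
      have := cast_sub_ge (2*(n/3)) 1; push_cast at this ⊢; linarith
    have h5 : ((n/3 : ℕ) : ℝ) ≥ ((n:ℝ) - 2)/3 := by
      have : ((3*(n/3) + 2 : ℕ) : ℝ) ≥ (n : ℝ) := by exact_mod_cast h3
      push_cast at this
      linarith
    push_cast at h4
    linarith
  linarith

lemma triple_ext {x y : ℕ × ℕ × ℕ} (h1 : x.1 = y.1) (h2 : x.2.1 = y.2.1)
    (h3 : x.2.2 = y.2.2) : x = y := by
  rcases x with ⟨x1, x2, x3⟩; rcases y with ⟨y1, y2, y3⟩; simp_all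

lemma seq_inj {n : ℕ} {f : ℕ → ℝ} (hf : ∀ i j, i < j → j ≤ n → f i < f j)
    {i i' : ℕ} (hi : i ≤ n) (hi' : i' ≤ n) (h : f i = f i') : i = i' := by
  rcases lt_trichotomy i i' with h' | h' | h'
  · exact absurd h (ne_of_lt (hf _ _ h' hi'))
  · exact h'
  · exact absurd h.symm (ne_of_lt (hf _ _ h' hi))

lemma gamma_finite (n : ℕ) (a b c : ℕ → ℝ) :
    {p : Fin 3 → ℝ | ∃ i j l : ℕ, i + j + l ≤ n ∧ p = ![a i, b j, c l]}.Finite := by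
  apply Set.Finite.subset (Finset.finite_toSet
    (((Finset.range (n+1)) ×ˢ (Finset.range (n+1)) ×ˢ (Finset.range (n+1))).image (pt3 a b c)))
  rintro p ⟨i, j, l, h, rfl⟩
  simp only [Finset.coe_image, Set.mem_image, Finset.mem_coe, Finset.mem_product,
    Finset.mem_range]
  exact ⟨(i, j, l), by simp; omega, rfl⟩

lemma card_le_ncard_of_inj {S : Finset (ℕ × ℕ × ℕ)} {E : Set (Fin 3 → ℝ)}
    (f : ℕ × ℕ × ℕ → (Fin 3 → ℝ)) (hmap : ∀ t ∈ S, f t ∈ E) (hinj : Set.InjOn f S)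
    (hE : E.Finite) : S.card ≤ E.ncard := by
  calc S.card = (S.image f).card := (Finset.card_image_of_injOn hinj).symm
  _ = ((S.image f : Finset _) : Set (Fin 3 → ℝ)).ncard := (Set.ncard_coe_finset _).symm
  _ ≤ E.ncard := by
      apply Set.ncard_le_ncard _ hE
      intro x hx
      simp only [Finset.coe_image, Set.mem_image, Finset.mem_coe] at hx
      obtain ⟨t, ht, rfl⟩ := hx
      exact hmap t ht

lemma ww_sum_le (n : ℕ) (S : Finset (ℕ × ℕ × ℕ)) (m1 m2 m3 m4 m5 m6 m7 : ℕ)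
    (H1 : (S.filter (fun t => t.2.1 = 0 ∧ t.2.2 = 0)).card ≤ m1)
    (H2 : (S.filter (fun t => t.1 = 0 ∧ t.2.2 = 0)).card ≤ m2)
    (H3 : (S.filter (fun t => t.1 = 0 ∧ t.2.1 = 0)).card ≤ m3)
    (H4 : (S.filter (fun t => 1 ≤ t.1 ∧ 1 ≤ t.2.1 ∧ t.2.2 = 0 ∧ t.1 + t.2.1 = n)).card ≤ m4)
    (H5 : (S.filter (fun t => 1 ≤ t.1 ∧ t.2.1 = 0 ∧ 1 ≤ t.2.2 ∧ t.1 + t.2.2 = n)).card ≤ m5)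
    (H6 : (S.filter (fun t => t.1 = 0 ∧ 1 ≤ t.2.1 ∧ 1 ≤ t.2.2 ∧ t.2.1 + t.2.2 = n)).card ≤ m6)
    (H7 : (S.filter (fun t => t ∈ DD n)).card ≤ m7) :
    ∑ t ∈ S, ww n t ≤
      m1 * 3⁻¹ + m2 * 3⁻¹ + m3 * 3⁻¹ + m4 * 6⁻¹ + m5 * 6⁻¹ + m6 * 6⁻¹ + m7 * 3⁻¹ := by
  unfold ww
  rw [Finset.sum_add_distrib, Finset.sum_add_distrib, Finset.sum_add_distrib,
      Finset.sum_add_distrib, Finset.sum_add_distrib, Finset.sum_add_distrib]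
  refine add_le_add (add_le_add (add_le_add (add_le_add (add_le_add (add_le_add ?_ ?_) ?_) ?_) ?_) ?_) ?_
  · exact sum_ite_le _ _ _ (by norm_num) _ H1
  · exact sum_ite_le _ _ _ (by norm_num) _ H2
  · exact sum_ite_le _ _ _ (by norm_num) _ H3
  · exact sum_ite_le _ _ _ (by norm_num) _ H4
  · exact sum_ite_le _ _ _ (by norm_num) _ H5
  · exact sum_ite_le _ _ _ (by norm_num) _ H6
  · exact sum_ite_le _ _ _ (by norm_num) _ H7

lemma plane_sum_le (n : ℕ) (a b c : ℕ → ℝ)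
    (ha0 : a 0 = 0) (hb0 : b 0 = 0) (hc0 : c 0 = 0)
    (ha : ∀ i j : ℕ, i < j → j ≤ n → a i < a j)
    (hb : ∀ i j : ℕ, i < j → j ≤ n → b i < b j)
    (hc : ∀ i j : ℕ, i < j → j ≤ n → c i < c j)
    (hgen : ∀ u lam : Fin 3 → ℝ,
      ({p ∈ {p : Fin 3 → ℝ | ∃ i j l : ℕ, i + j + l ≤ n ∧ p = ![a i, b j, c l]} |
         (∑ i, u i * p i) = 1 ∧ ∀ j, u j = 0 → p j = lam j}).ncard
        ≤ (Finset.univ.filter (fun i => u i ≠ 0)).card)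
    (v : Fin 3 → ℝ) :
    ∑ t ∈ (TT n).filter (fun t => v 0 * a t.1 + v 1 * b t.2.1 + v 2 * c t.2.2 = 1),
      ww n t ≤ 1 := by
  classical
  set Γs : Set (Fin 3 → ℝ) :=
    {p : Fin 3 → ℝ | ∃ i j l : ℕ, i + j + l ≤ n ∧ p = ![a i, b j, c l]} with hΓs
  have hΓfin : Γs.Finite := gamma_finite n a b c
  set Tf := (TT n).filter (fun t => v 0 * a t.1 + v 1 * b t.2.1 + v 2 * c t.2.2 = 1) with hTf
  have hmemTf : ∀ t ∈ Tf, (t.1 + t.2.1 + t.2.2 ≤ n ∧ ¬(t.1 = 0 ∧ t.2.1 = 0 ∧ t.2.2 = 0)) ∧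
      v 0 * a t.1 + v 1 * b t.2.1 + v 2 * c t.2.2 = 1 := by
    intro t ht
    rw [hTf, Finset.mem_filter, mem_TT] at ht
    exact ht
  have hptΓ : ∀ t ∈ Tf, pt3 a b c t ∈ Γs := by
    intro t ht
    exact ⟨t.1, t.2.1, t.2.2, (hmemTf t ht).1.1, rfl⟩
  have hptsum : ∀ t ∈ Tf, (∑ i, v i * pt3 a b c t i) = 1 := by
    intro t ht
    rw [Fin.sum_univ_three]
    exact (hmemTf t ht).2
  have hinjTf : ∀ S : Finset (ℕ × ℕ × ℕ), (∀ t ∈ S, t ∈ Tf) →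
      Set.InjOn (pt3 a b c) S := by
    intro S hS t ht t' ht' h
    have h0 := congrFun h 0
    have h1 := congrFun h 1
    have h2 := congrFun h 2
    rw [pt3_0, pt3_0] at h0
    rw [pt3_1, pt3_1] at h1
    rw [pt3_2, pt3_2] at h2
    have hm := (hmemTf t (hS t ht)).1.1
    have hm' := (hmemTf t' (hS t' ht')).1.1
    exact triple_ext (seq_inj ha (by omega) (by omega) h0)
      (seq_inj hb (by omega) (by omega) h1) (seq_inj hc (by omega) (by omega) h2)
  by_cases h0 : v 0 = 0 <;> by_cases h1 : v 1 = 0 <;> by_cases h2 : v 2 = 0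
  -- case 1 : all zero
  · have hempty : Tf = ∅ := by
      rw [hTf]
      apply Finset.filter_false_of_mem
      intro t _
      rw [h0, h1, h2]
      norm_num
    rw [hempty]
    norm_num
  -- case 2 : v0 = 0, v1 = 0, v2 ≠ 0  (z-layer)
  · have hEq : ∀ t ∈ Tf, v 2 * c t.2.2 = 1 := by
      intro t ht
      have := (hmemTf t ht).2
      rw [h0, h1] at this; linarith
    have hSame : ∀ t ∈ Tf, ∀ t' ∈ Tf, t.2.2 = t'.2.2 := by
      intro t ht t' ht'
      have e := (hEq t ht).trans (hEq t' ht').symm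
      have hcc := mul_left_cancel₀ h2 e
      exact seq_inj hc (by have := (hmemTf t ht).1.1; omega)
        (by have := (hmemTf t' ht').1.1; omega) hcc
    have hPos : ∀ t ∈ Tf, 1 ≤ t.2.2 := by
      intro t ht
      by_contra hcon
      have ht0 : t.2.2 = 0 := by omega
      have := hEq t ht
      rw [ht0, hc0] at this; simp at this
    refine le_trans (ww_sum_le n Tf 0 0 1 0 1 1 1 ?_ ?_ ?_ ?_ ?_ ?_ ?_) (by norm_num)
    · apply card_filter_eq_zero
      intro t ht hcond
      have := hPos t ht; omega
    · apply card_filter_eq_zero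
      intro t ht hcond
      have := hPos t ht; omega
    · apply card_filter_le_one
      intro x hx hpx y hy hpy
      exact triple_ext (by omega) (by omega) (hSame x hx y hy)
    · apply card_filter_eq_zero
      intro t ht hcond
      have := hPos t ht; omega
    · apply card_filter_le_one
      intro x hx hpx y hy hpy
      have h3 := hSame x hx y hy
      exact triple_ext (by omega) (by omega) h3
    · apply card_filter_le_one
      intro x hx hpx y hy hpy
      have h3 := hSame x hx y hy
      exact triple_ext (by omega) (by omega) h3
    · apply card_filter_le_one
      intro x hx hpx y hy hpy
      exact DD_inj3 hpx hpy (hSame x hx y hy)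
  -- case 3 : v0 = 0, v1 ≠ 0, v2 = 0  (y-layer)
  · have hEq : ∀ t ∈ Tf, v 1 * b t.2.1 = 1 := by
      intro t ht
      have := (hmemTf t ht).2
      rw [h0, h2] at this; linarith
    have hSame : ∀ t ∈ Tf, ∀ t' ∈ Tf, t.2.1 = t'.2.1 := by
      intro t ht t' ht'
      have e := (hEq t ht).trans (hEq t' ht').symm
      have hbb := mul_left_cancel₀ h1 e
      exact seq_inj hb (by have := (hmemTf t ht).1.1; omega)
        (by have := (hmemTf t' ht').1.1; omega) hbb
    have hPos : ∀ t ∈ Tf, 1 ≤ t.2.1 := by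
      intro t ht
      by_contra hcon
      have ht0 : t.2.1 = 0 := by omega
      have := hEq t ht
      rw [ht0, hb0] at this; simp at this
    refine le_trans (ww_sum_le n Tf 0 1 0 1 0 1 1 ?_ ?_ ?_ ?_ ?_ ?_ ?_) (by norm_num)
    · apply card_filter_eq_zero
      intro t ht hcond
      have := hPos t ht; omega
    · apply card_filter_le_one
      intro x hx hpx y hy hpy
      exact triple_ext (by omega) (hSame x hx y hy) (by omega)
    · apply card_filter_eq_zero
      intro t ht hcond
      have := hPos t ht; omega
    · apply card_filter_le_one
      intro x hx hpx y hy hpy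
      have h3 := hSame x hx y hy
      exact triple_ext (by omega) h3 (by omega)
    · apply card_filter_eq_zero
      intro t ht hcond
      have := hPos t ht; omega
    · apply card_filter_le_one
      intro x hx hpx y hy hpy
      have h3 := hSame x hx y hy
      exact triple_ext (by omega) h3 (by omega)
    · apply card_filter_le_one
      intro x hx hpx y hy hpy
      exact DD_inj2 hpx hpy (hSame x hx y hy)
  · -- case 4 : v0 = 0, v1 ≠ 0, v2 ≠ 0 (columns along x)
    have hEq : ∀ t ∈ Tf, v 1 * b t.2.1 + v 2 * c t.2.2 = 1 := by
      intro t ht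
      have := (hmemTf t ht).2
      rw [h0] at this; linarith
    set S2 := Tf.filter (fun t => t.1 = 0) with hS2
    have hS2card : S2.card ≤ 2 := by
      have hg := hgen v (fun _ => 0)
      have hfil : (Finset.univ.filter (fun i : Fin 3 => v i ≠ 0)) = {1, 2} := by
        ext i
        fin_cases i <;> simp [h0, h1, h2]
      rw [hfil] at hg
      have h2card : ({1, 2} : Finset (Fin 3)).card = 2 := by decide
      rw [h2card] at hg
      refine le_trans (card_le_ncard_of_inj (pt3 a b c)
        ?_ (hinjTf S2 (fun t ht => (Finset.mem_filter.1 ht).1)) ?_) hg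
      · intro t ht
        have htTf := (Finset.mem_filter.1 ht).1
        have ht3 : t.1 = 0 := (Finset.mem_filter.1 ht).2
        refine ⟨hptΓ t htTf, hptsum t htTf, ?_⟩
        intro j hj
        fin_cases j
        · show a t.1 = 0
          rw [ht3, ha0]
        · exact absurd hj h1
        · exact absurd hj h2
      · exact hΓfin.subset (fun x hx => hx.1)
    have hmaps : ∀ t ∈ Tf, ((0 : ℕ), t.2.1, t.2.2) ∈ S2 := by
      intro t ht
      have heq := hEq t ht
      have hm := hmemTf t ht
      refine Finset.mem_filter.2 ⟨?_, rfl⟩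
      rw [hTf, Finset.mem_filter, mem_TT]
      refine ⟨⟨by simp; omega, ?_⟩, ?_⟩
      · rintro ⟨-, hj, hl⟩
        simp only at hj hl
        rw [hj, hl, hb0, hc0] at heq
        norm_num at heq
      · show v 0 * a 0 + v 1 * b t.2.1 + v 2 * c t.2.2 = 1
        rw [h0]; linarith
    rw [← Finset.sum_fiberwise_of_maps_to hmaps (ww n)]
    have hcol : ∀ s ∈ S2,
        (∑ t ∈ Tf.filter (fun t => ((0 : ℕ), t.2.1, t.2.2) = s), ww n t) ≤ 2⁻¹ := by
      intro s hs
      have hsTf := (Finset.mem_filter.1 hs).1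
      have hs3 : s.1 = 0 := (Finset.mem_filter.1 hs).2
      have hsm := hmemTf s hsTf
      have hcm : ∀ t ∈ Tf.filter (fun t => ((0 : ℕ), t.2.1, t.2.2) = s),
          t.2.1 = s.2.1 ∧ t.2.2 = s.2.2 := by
        intro t ht
        have h' := (Finset.mem_filter.1 ht).2
        exact ⟨congrArg (fun q => q.2.1) h', congrArg (fun q => q.2.2) h'⟩
      rcases Nat.eq_zero_or_pos s.2.2 with hl | hl
      · have hj : 1 ≤ s.2.1 := by
          rcases Nat.eq_zero_or_pos s.2.1 with hj0 | hj0
          · exact absurd ⟨hs3, hj0, hl⟩ hsm.1.2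
          · exact hj0
        refine le_trans (ww_sum_le n _ 0 1 0 1 0 0 0 ?_ ?_ ?_ ?_ ?_ ?_ ?_) (by norm_num)
        · apply card_filter_eq_zero
          intro t ht hcond
          obtain ⟨ht1, ht2⟩ := hcm t ht; omega
        · apply card_filter_le_one
          intro x hx hpx y hy hpy
          obtain ⟨hx1, hx2⟩ := hcm x hx; obtain ⟨hy1, hy2⟩ := hcm y hy
          exact triple_ext (by omega) (by omega) (by omega)
        · apply card_filter_eq_zero
          intro t ht hcond
          obtain ⟨ht1, ht2⟩ := hcm t ht; omega
        · apply card_filter_le_one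
          intro x hx hpx y hy hpy
          obtain ⟨hx1, hx2⟩ := hcm x hx; obtain ⟨hy1, hy2⟩ := hcm y hy
          exact triple_ext (by omega) (by omega) (by omega)
        · apply card_filter_eq_zero
          intro t ht hcond
          obtain ⟨ht1, ht2⟩ := hcm t ht; omega
        · apply card_filter_eq_zero
          intro t ht hcond
          obtain ⟨ht1, ht2⟩ := hcm t ht; omega
        · apply card_filter_eq_zero
          intro t ht hcond
          obtain ⟨ht1, ht2⟩ := hcm t ht
          have := DD_spec hcond; omega
      · rcases Nat.eq_zero_or_pos s.2.1 with hj | hj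
        · refine le_trans (ww_sum_le n _ 0 0 1 0 1 0 0 ?_ ?_ ?_ ?_ ?_ ?_ ?_) (by norm_num)
          · apply card_filter_eq_zero
            intro t ht hcond
            obtain ⟨ht1, ht2⟩ := hcm t ht; omega
          · apply card_filter_eq_zero
            intro t ht hcond
            obtain ⟨ht1, ht2⟩ := hcm t ht; omega
          · apply card_filter_le_one
            intro x hx hpx y hy hpy
            obtain ⟨hx1, hx2⟩ := hcm x hx; obtain ⟨hy1, hy2⟩ := hcm y hy
            exact triple_ext (by omega) (by omega) (by omega)
          · apply card_filter_eq_zero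
            intro t ht hcond
            obtain ⟨ht1, ht2⟩ := hcm t ht; omega
          · apply card_filter_le_one
            intro x hx hpx y hy hpy
            obtain ⟨hx1, hx2⟩ := hcm x hx; obtain ⟨hy1, hy2⟩ := hcm y hy
            exact triple_ext (by omega) (by omega) (by omega)
          · apply card_filter_eq_zero
            intro t ht hcond
            obtain ⟨ht1, ht2⟩ := hcm t ht; omega
          · apply card_filter_eq_zero
            intro t ht hcond
            obtain ⟨ht1, ht2⟩ := hcm t ht
            have := DD_spec hcond; omega
        · refine le_trans (ww_sum_le n _ 0 0 0 0 0 1 1 ?_ ?_ ?_ ?_ ?_ ?_ ?_) (by norm_num)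
          · apply card_filter_eq_zero
            intro t ht hcond
            obtain ⟨ht1, ht2⟩ := hcm t ht; omega
          · apply card_filter_eq_zero
            intro t ht hcond
            obtain ⟨ht1, ht2⟩ := hcm t ht; omega
          · apply card_filter_eq_zero
            intro t ht hcond
            obtain ⟨ht1, ht2⟩ := hcm t ht; omega
          · apply card_filter_eq_zero
            intro t ht hcond
            obtain ⟨ht1, ht2⟩ := hcm t ht; omega
          · apply card_filter_eq_zero
            intro t ht hcond
            obtain ⟨ht1, ht2⟩ := hcm t ht; omega
          · apply card_filter_le_one
            intro x hx hpx y hy hpy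
            obtain ⟨hx1, hx2⟩ := hcm x hx; obtain ⟨hy1, hy2⟩ := hcm y hy
            exact triple_ext (by omega) (by omega) (by omega)
          · apply card_filter_le_one
            intro x hx hpx y hy hpy
            obtain ⟨hx1, hx2⟩ := hcm x hx; obtain ⟨hy1, hy2⟩ := hcm y hy
            exact DD_inj2 hpx hpy (by omega)
    calc ∑ s ∈ S2, ∑ t ∈ Tf.filter (fun t => ((0 : ℕ), t.2.1, t.2.2) = s), ww n t
        ≤ S2.card • (2⁻¹ : ℝ) := Finset.sum_le_card_nsmul _ _ _ hcol
    _ ≤ 2 * 2⁻¹ := by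
        rw [nsmul_eq_mul]
        exact mul_le_mul_of_nonneg_right (by exact_mod_cast hS2card) (by norm_num)
    _ ≤ 1 := by norm_num
  -- case 5 : v0 ≠ 0, v1 = 0, v2 = 0  (x-layer)
  · have hEq : ∀ t ∈ Tf, v 0 * a t.1 = 1 := by
      intro t ht
      have := (hmemTf t ht).2
      rw [h1, h2] at this; linarith
    have hSame : ∀ t ∈ Tf, ∀ t' ∈ Tf, t.1 = t'.1 := by
      intro t ht t' ht'
      have e := (hEq t ht).trans (hEq t' ht').symm
      have haa := mul_left_cancel₀ h0 e
      exact seq_inj ha (by have := (hmemTf t ht).1.1; omega)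
        (by have := (hmemTf t' ht').1.1; omega) haa
    have hPos : ∀ t ∈ Tf, 1 ≤ t.1 := by
      intro t ht
      by_contra hcon
      have ht0 : t.1 = 0 := by omega
      have := hEq t ht
      rw [ht0, ha0] at this; simp at this
    refine le_trans (ww_sum_le n Tf 1 0 0 1 1 0 1 ?_ ?_ ?_ ?_ ?_ ?_ ?_) (by norm_num)
    · apply card_filter_le_one
      intro x hx hpx y hy hpy
      exact triple_ext (hSame x hx y hy) (by omega) (by omega)
    · apply card_filter_eq_zero
      intro t ht hcond
      have := hPos t ht; omega
    · apply card_filter_eq_zero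
      intro t ht hcond
      have := hPos t ht; omega
    · apply card_filter_le_one
      intro x hx hpx y hy hpy
      have h3 := hSame x hx y hy
      exact triple_ext h3 (by omega) (by omega)
    · apply card_filter_le_one
      intro x hx hpx y hy hpy
      have h3 := hSame x hx y hy
      exact triple_ext h3 (by omega) (by omega)
    · apply card_filter_eq_zero
      intro t ht hcond
      have := hPos t ht; omega
    · apply card_filter_le_one
      intro x hx hpx y hy hpy
      exact DD_inj1 hpx hpy (hSame x hx y hy)
  · -- case 6 : v0 ≠ 0, v1 = 0, v2 ≠ 0 (columns along y)
    have hEq : ∀ t ∈ Tf, v 0 * a t.1 + v 2 * c t.2.2 = 1 := by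
      intro t ht
      have := (hmemTf t ht).2
      rw [h1] at this; linarith
    set S2 := Tf.filter (fun t => t.2.1 = 0) with hS2
    have hS2card : S2.card ≤ 2 := by
      have hg := hgen v (fun _ => 0)
      have hfil : (Finset.univ.filter (fun i : Fin 3 => v i ≠ 0)) = {0, 2} := by
        ext i
        fin_cases i <;> simp [h0, h1, h2]
      rw [hfil] at hg
      have h2card : ({0, 2} : Finset (Fin 3)).card = 2 := by decide
      rw [h2card] at hg
      refine le_trans (card_le_ncard_of_inj (pt3 a b c)
        ?_ (hinjTf S2 (fun t ht => (Finset.mem_filter.1 ht).1)) ?_) hg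
      · intro t ht
        have htTf := (Finset.mem_filter.1 ht).1
        have ht3 : t.2.1 = 0 := (Finset.mem_filter.1 ht).2
        refine ⟨hptΓ t htTf, hptsum t htTf, ?_⟩
        intro j hj
        fin_cases j
        · exact absurd hj h0
        · show b t.2.1 = 0
          rw [ht3, hb0]
        · exact absurd hj h2
      · exact hΓfin.subset (fun x hx => hx.1)
    have hmaps : ∀ t ∈ Tf, (t.1, 0, t.2.2) ∈ S2 := by
      intro t ht
      have heq := hEq t ht
      have hm := hmemTf t ht
      refine Finset.mem_filter.2 ⟨?_, rfl⟩
      rw [hTf, Finset.mem_filter, mem_TT]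
      refine ⟨⟨by simp; omega, ?_⟩, ?_⟩
      · rintro ⟨hi, -, hl⟩
        simp only at hi hl
        rw [hi, hl, ha0, hc0] at heq
        norm_num at heq
      · show v 0 * a t.1 + v 1 * b 0 + v 2 * c t.2.2 = 1
        rw [h1]; linarith
    rw [← Finset.sum_fiberwise_of_maps_to hmaps (ww n)]
    have hcol : ∀ s ∈ S2,
        (∑ t ∈ Tf.filter (fun t => (t.1, 0, t.2.2) = s), ww n t) ≤ 2⁻¹ := by
      intro s hs
      have hsTf := (Finset.mem_filter.1 hs).1
      have hs3 : s.2.1 = 0 := (Finset.mem_filter.1 hs).2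
      have hsm := hmemTf s hsTf
      have hcm : ∀ t ∈ Tf.filter (fun t => (t.1, 0, t.2.2) = s),
          t.1 = s.1 ∧ t.2.2 = s.2.2 := by
        intro t ht
        have h' := (Finset.mem_filter.1 ht).2
        exact ⟨congrArg (fun q => q.1) h', congrArg (fun q => q.2.2) h'⟩
      rcases Nat.eq_zero_or_pos s.2.2 with hl | hl
      · have hi : 1 ≤ s.1 := by
          rcases Nat.eq_zero_or_pos s.1 with hi0 | hi0
          · exact absurd ⟨hi0, hs3, hl⟩ hsm.1.2
          · exact hi0
        refine le_trans (ww_sum_le n _ 1 0 0 1 0 0 0 ?_ ?_ ?_ ?_ ?_ ?_ ?_) (by norm_num)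
        · apply card_filter_le_one
          intro x hx hpx y hy hpy
          obtain ⟨hx1, hx2⟩ := hcm x hx; obtain ⟨hy1, hy2⟩ := hcm y hy
          exact triple_ext (by omega) (by omega) (by omega)
        · apply card_filter_eq_zero
          intro t ht hcond
          obtain ⟨ht1, ht2⟩ := hcm t ht; omega
        · apply card_filter_eq_zero
          intro t ht hcond
          obtain ⟨ht1, ht2⟩ := hcm t ht; omega
        · apply card_filter_le_one
          intro x hx hpx y hy hpy
          obtain ⟨hx1, hx2⟩ := hcm x hx; obtain ⟨hy1, hy2⟩ := hcm y hy
          exact triple_ext (by omega) (by omega) (by omega)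
        · apply card_filter_eq_zero
          intro t ht hcond
          obtain ⟨ht1, ht2⟩ := hcm t ht; omega
        · apply card_filter_eq_zero
          intro t ht hcond
          obtain ⟨ht1, ht2⟩ := hcm t ht; omega
        · apply card_filter_eq_zero
          intro t ht hcond
          obtain ⟨ht1, ht2⟩ := hcm t ht
          have := DD_spec hcond; omega
      · rcases Nat.eq_zero_or_pos s.1 with hi | hi
        · refine le_trans (ww_sum_le n _ 0 0 1 0 0 1 0 ?_ ?_ ?_ ?_ ?_ ?_ ?_) (by norm_num)
          · apply card_filter_eq_zero
            intro t ht hcond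
            obtain ⟨ht1, ht2⟩ := hcm t ht; omega
          · apply card_filter_eq_zero
            intro t ht hcond
            obtain ⟨ht1, ht2⟩ := hcm t ht; omega
          · apply card_filter_le_one
            intro x hx hpx y hy hpy
            obtain ⟨hx1, hx2⟩ := hcm x hx; obtain ⟨hy1, hy2⟩ := hcm y hy
            exact triple_ext (by omega) (by omega) (by omega)
          · apply card_filter_eq_zero
            intro t ht hcond
            obtain ⟨ht1, ht2⟩ := hcm t ht; omega
          · apply card_filter_eq_zero
            intro t ht hcond
            obtain ⟨ht1, ht2⟩ := hcm t ht; omega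
          · apply card_filter_le_one
            intro x hx hpx y hy hpy
            obtain ⟨hx1, hx2⟩ := hcm x hx; obtain ⟨hy1, hy2⟩ := hcm y hy
            exact triple_ext (by omega) (by omega) (by omega)
          · apply card_filter_eq_zero
            intro t ht hcond
            obtain ⟨ht1, ht2⟩ := hcm t ht
            have := DD_spec hcond; omega
        · refine le_trans (ww_sum_le n _ 0 0 0 0 1 0 1 ?_ ?_ ?_ ?_ ?_ ?_ ?_) (by norm_num)
          · apply card_filter_eq_zero
            intro t ht hcond
            obtain ⟨ht1, ht2⟩ := hcm t ht; omega
          · apply card_filter_eq_zero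
            intro t ht hcond
            obtain ⟨ht1, ht2⟩ := hcm t ht; omega
          · apply card_filter_eq_zero
            intro t ht hcond
            obtain ⟨ht1, ht2⟩ := hcm t ht; omega
          · apply card_filter_eq_zero
            intro t ht hcond
            obtain ⟨ht1, ht2⟩ := hcm t ht; omega
          · apply card_filter_le_one
            intro x hx hpx y hy hpy
            obtain ⟨hx1, hx2⟩ := hcm x hx; obtain ⟨hy1, hy2⟩ := hcm y hy
            exact triple_ext (by omega) (by omega) (by omega)
          · apply card_filter_eq_zero
            intro t ht hcond
            obtain ⟨ht1, ht2⟩ := hcm t ht; omega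
          · apply card_filter_le_one
            intro x hx hpx y hy hpy
            obtain ⟨hx1, hx2⟩ := hcm x hx; obtain ⟨hy1, hy2⟩ := hcm y hy
            exact DD_inj1 hpx hpy (by omega)
    calc ∑ s ∈ S2, ∑ t ∈ Tf.filter (fun t => (t.1, 0, t.2.2) = s), ww n t
        ≤ S2.card • (2⁻¹ : ℝ) := Finset.sum_le_card_nsmul _ _ _ hcol
    _ ≤ 2 * 2⁻¹ := by
        rw [nsmul_eq_mul]
        exact mul_le_mul_of_nonneg_right (by exact_mod_cast hS2card) (by norm_num)
    _ ≤ 1 := by norm_num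
  · -- case 7 : v0 ≠ 0, v1 ≠ 0, v2 = 0 (columns along z)
    have hEq : ∀ t ∈ Tf, v 0 * a t.1 + v 1 * b t.2.1 = 1 := by
      intro t ht
      have := (hmemTf t ht).2
      rw [h2] at this; linarith
    set S2 := Tf.filter (fun t => t.2.2 = 0) with hS2
    have hS2card : S2.card ≤ 2 := by
      have hg := hgen v (fun _ => 0)
      have hfil : (Finset.univ.filter (fun i : Fin 3 => v i ≠ 0)) = {0, 1} := by
        ext i
        fin_cases i <;> simp [h0, h1, h2]
      rw [hfil] at hg
      have h2card : ({0, 1} : Finset (Fin 3)).card = 2 := by decide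
      rw [h2card] at hg
      refine le_trans (card_le_ncard_of_inj (pt3 a b c)
        ?_ (hinjTf S2 (fun t ht => (Finset.mem_filter.1 ht).1)) ?_) hg
      · intro t ht
        have htTf := (Finset.mem_filter.1 ht).1
        have ht3 : t.2.2 = 0 := (Finset.mem_filter.1 ht).2
        refine ⟨hptΓ t htTf, hptsum t htTf, ?_⟩
        intro j hj
        fin_cases j
        · exact absurd hj h0
        · exact absurd hj h1
        · show c t.2.2 = 0
          rw [ht3, hc0]
      · exact hΓfin.subset (fun x hx => hx.1)
    have hmaps : ∀ t ∈ Tf, (t.1, t.2.1, 0) ∈ S2 := by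
      intro t ht
      have heq := hEq t ht
      have hm := hmemTf t ht
      refine Finset.mem_filter.2 ⟨?_, rfl⟩
      rw [hTf, Finset.mem_filter, mem_TT]
      refine ⟨⟨by simp; omega, ?_⟩, ?_⟩
      · rintro ⟨hi, hj, -⟩
        simp only at hi hj
        rw [hi, hj, ha0, hb0] at heq
        norm_num at heq
      · show v 0 * a t.1 + v 1 * b t.2.1 + v 2 * c 0 = 1
        rw [h2]; linarith
    rw [← Finset.sum_fiberwise_of_maps_to hmaps (ww n)]
    have hcol : ∀ s ∈ S2,
        (∑ t ∈ Tf.filter (fun t => (t.1, t.2.1, 0) = s), ww n t) ≤ 2⁻¹ := by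
      intro s hs
      have hsTf := (Finset.mem_filter.1 hs).1
      have hs3 : s.2.2 = 0 := (Finset.mem_filter.1 hs).2
      have hsm := hmemTf s hsTf
      have hcm : ∀ t ∈ Tf.filter (fun t => (t.1, t.2.1, 0) = s),
          t.1 = s.1 ∧ t.2.1 = s.2.1 := by
        intro t ht
        have h' := (Finset.mem_filter.1 ht).2
        exact ⟨congrArg (fun q => q.1) h', congrArg (fun q => q.2.1) h'⟩
      rcases Nat.eq_zero_or_pos s.2.1 with hj | hj
      · have hi : 1 ≤ s.1 := by
          rcases Nat.eq_zero_or_pos s.1 with hi0 | hi0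
          · exact absurd ⟨hi0, hj, hs3⟩ hsm.1.2
          · exact hi0
        refine le_trans (ww_sum_le n _ 1 0 0 0 1 0 0 ?_ ?_ ?_ ?_ ?_ ?_ ?_) (by norm_num)
        · apply card_filter_le_one
          intro x hx hpx y hy hpy
          obtain ⟨hx1, hx2⟩ := hcm x hx; obtain ⟨hy1, hy2⟩ := hcm y hy
          exact triple_ext (by omega) (by omega) (by omega)
        · apply card_filter_eq_zero
          intro t ht hcond
          obtain ⟨ht1, ht2⟩ := hcm t ht; omega
        · apply card_filter_eq_zero
          intro t ht hcond
          obtain ⟨ht1, ht2⟩ := hcm t ht; omega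
        · apply card_filter_eq_zero
          intro t ht hcond
          obtain ⟨ht1, ht2⟩ := hcm t ht; omega
        · apply card_filter_le_one
          intro x hx hpx y hy hpy
          obtain ⟨hx1, hx2⟩ := hcm x hx; obtain ⟨hy1, hy2⟩ := hcm y hy
          exact triple_ext (by omega) (by omega) (by omega)
        · apply card_filter_eq_zero
          intro t ht hcond
          obtain ⟨ht1, ht2⟩ := hcm t ht; omega
        · apply card_filter_eq_zero
          intro t ht hcond
          obtain ⟨ht1, ht2⟩ := hcm t ht
          have := DD_spec hcond; omega
      · rcases Nat.eq_zero_or_pos s.1 with hi | hi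
        · refine le_trans (ww_sum_le n _ 0 1 0 0 0 1 0 ?_ ?_ ?_ ?_ ?_ ?_ ?_) (by norm_num)
          · apply card_filter_eq_zero
            intro t ht hcond
            obtain ⟨ht1, ht2⟩ := hcm t ht; omega
          · apply card_filter_le_one
            intro x hx hpx y hy hpy
            obtain ⟨hx1, hx2⟩ := hcm x hx; obtain ⟨hy1, hy2⟩ := hcm y hy
            exact triple_ext (by omega) (by omega) (by omega)
          · apply card_filter_eq_zero
            intro t ht hcond
            obtain ⟨ht1, ht2⟩ := hcm t ht; omega
          · apply card_filter_eq_zero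
            intro t ht hcond
            obtain ⟨ht1, ht2⟩ := hcm t ht; omega
          · apply card_filter_eq_zero
            intro t ht hcond
            obtain ⟨ht1, ht2⟩ := hcm t ht; omega
          · apply card_filter_le_one
            intro x hx hpx y hy hpy
            obtain ⟨hx1, hx2⟩ := hcm x hx; obtain ⟨hy1, hy2⟩ := hcm y hy
            exact triple_ext (by omega) (by omega) (by omega)
          · apply card_filter_eq_zero
            intro t ht hcond
            obtain ⟨ht1, ht2⟩ := hcm t ht
            have := DD_spec hcond; omega
        · refine le_trans (ww_sum_le n _ 0 0 0 1 0 0 1 ?_ ?_ ?_ ?_ ?_ ?_ ?_) (by norm_num)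
          · apply card_filter_eq_zero
            intro t ht hcond
            obtain ⟨ht1, ht2⟩ := hcm t ht; omega
          · apply card_filter_eq_zero
            intro t ht hcond
            obtain ⟨ht1, ht2⟩ := hcm t ht; omega
          · apply card_filter_eq_zero
            intro t ht hcond
            obtain ⟨ht1, ht2⟩ := hcm t ht; omega
          · apply card_filter_le_one
            intro x hx hpx y hy hpy
            obtain ⟨hx1, hx2⟩ := hcm x hx; obtain ⟨hy1, hy2⟩ := hcm y hy
            exact triple_ext (by omega) (by omega) (by omega)
          · apply card_filter_eq_zero
            intro t ht hcond
            obtain ⟨ht1, ht2⟩ := hcm t ht; omega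
          · apply card_filter_eq_zero
            intro t ht hcond
            obtain ⟨ht1, ht2⟩ := hcm t ht; omega
          · apply card_filter_le_one
            intro x hx hpx y hy hpy
            obtain ⟨hx1, hx2⟩ := hcm x hx; obtain ⟨hy1, hy2⟩ := hcm y hy
            exact DD_inj1 hpx hpy (by omega)
    calc ∑ s ∈ S2, ∑ t ∈ Tf.filter (fun t => (t.1, t.2.1, 0) = s), ww n t
        ≤ S2.card • (2⁻¹ : ℝ) := Finset.sum_le_card_nsmul _ _ _ hcol
    _ ≤ 2 * 2⁻¹ := by
        rw [nsmul_eq_mul]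
        exact mul_le_mul_of_nonneg_right (by exact_mod_cast hS2card) (by norm_num)
    _ ≤ 1 := by norm_num
  -- case 8 : all nonzero
  · have hfil : (Finset.univ.filter (fun i : Fin 3 => v i ≠ 0)) = Finset.univ := by
      apply Finset.filter_true_of_mem
      intro i _
      fin_cases i <;> assumption
    have hcard : Tf.card ≤ 3 := by
      have hg := hgen v (fun _ => 0)
      rw [hfil] at hg
      simp only [Finset.card_univ, Fintype.card_fin] at hg
      refine le_trans (card_le_ncard_of_inj (pt3 a b c) ?_ (hinjTf Tf (fun t ht => ht)) ?_) hg
      · intro t ht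
        refine ⟨hptΓ t ht, hptsum t ht, ?_⟩
        intro j hj
        fin_cases j <;> [exact absurd hj h0; exact absurd hj h1; exact absurd hj h2]
      · exact hΓfin.subset (fun x hx => hx.1)
    calc ∑ t ∈ Tf, ww n t ≤ Tf.card • (3⁻¹ : ℝ) := by
          apply Finset.sum_le_card_nsmul
          intro t ht
          exact ww_le_third (hmemTf t ht).1.2
    _ ≤ 3 * 3⁻¹ := by
          rw [nsmul_eq_mul]
          exact mul_le_mul_of_nonneg_right (by exact_mod_cast hcard) (by norm_num)
    _ ≤ 1 := by norm_num

lemma multiset_sum_swap {X Y : Type*} (T : Finset Y) (M : Multiset X) (g : X → Y → ℝ) :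
    (M.map (fun P => ∑ t ∈ T, g P t)).sum = ∑ t ∈ T, (M.map (fun P => g P t)).sum := by
  induction M using Multiset.induction_on with
  | empty => simp
  | cons P M ih => simp [ih, Finset.sum_add_distrib]

lemma multiset_count_eq {X : Type*} (M : Multiset X) (q : X → Prop) (w : ℝ) :
    (M.map (fun P => if q P then w else 0)).sum = (M.countP q : ℝ) * w := by
  induction M using Multiset.induction_on with
  | empty => simp
  | cons P M ih =>
    by_cases h : q P <;> simp [Multiset.countP_cons, h, ih] <;> ring

lemma onplane_iff (P : (Fin 3 → ℝ) × ℝ) (hd : P.2 ≠ 0) (x y z : ℝ) :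
    (P.1 0 * x + P.1 1 * y + P.1 2 * z = P.2) ↔
      ((P.2⁻¹ * P.1 0) * x + (P.2⁻¹ * P.1 1) * y + (P.2⁻¹ * P.1 2) * z = 1) := by
  constructor <;> intro h
  · rw [mul_assoc, mul_assoc, mul_assoc, ← mul_add, ← mul_add, h, inv_mul_cancel₀ hd]
  · have h2 : P.2 * ((P.2⁻¹ * P.1 0) * x + (P.2⁻¹ * P.1 1) * y + (P.2⁻¹ * P.1 2) * z) = P.2 * 1 := by
      rw [h]
    field_simp at h2
    linarith

end Stmt9Aux

open Stmt9Aux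

theorem stmt_9 :
    ∃ C : ℝ, 0 < C ∧
      ∀ n : ℕ, ∀ a b c : ℕ → ℝ,
        -- 0 = a₀ < a₁ < ⋯ < a_n, 0 = b₀ < b₁ < ⋯ < b_n, 0 = c₀ < c₁ < ⋯ < c_n
        a 0 = 0 → b 0 = 0 → c 0 = 0 →
        (∀ i j : ℕ, i < j → j ≤ n → a i < a j) →
        (∀ i j : ℕ, i < j → j ≤ n → b i < b j) →
        (∀ i j : ℕ, i < j → j ≤ n → c i < c j) →
      -- the 3-dimensional half-grid Γ of order n
      ∀ Γ : Set (Fin 3 → ℝ),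
        Γ = {p | ∃ i j l : ℕ, i + j + l ≤ n ∧ p = ![a i, b j, c l]} →
        -- genericity: for every plane u·x = 1 with support I and scalars λⱼ, j ∉ I,
        -- at most |I| points of Γ satisfy ∑_{i ∈ I} uᵢxᵢ = 1 and xⱼ = λⱼ for all j ∉ I
        (∀ u lam : Fin 3 → ℝ,
          ({p ∈ Γ | (∑ i, u i * p i) = 1 ∧ ∀ j, u j = 0 → p j = lam j}).ncard
            ≤ (Finset.univ.filter (fun i => u i ≠ 0)).card) →
      ∀ k : ℕ, 0 < k →
      ∀ M : Multiset ((Fin 3 → ℝ) × ℝ),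
        -- each element is a plane not passing through the origin
        (∀ P ∈ M, P.1 ≠ 0 ∧ P.2 ≠ 0) →
        -- M covers every point of Γ ∖ {(0,0,0)} at least k times, with multiplicity
        (∀ p ∈ Γ, p ≠ 0 → k ≤ M.countP (fun P => IsOnPlane P p)) →
        31 / 18 * (n : ℝ) * (k : ℝ) - C * (k : ℝ) ≤ (Multiset.card M : ℝ) := by
  refine ⟨2, by norm_num, ?_⟩
  intro n a b c ha0 hb0 hc0 ha hb hc Γ hΓ hgen k hk M hM hcov
  subst hΓ
  -- each point of the grid index set is covered k times
  have hcount : ∀ t ∈ TT n, (k : ℝ) ≤ (M.countP (fun P => IsOnPlane P (pt3 a b c t)) : ℝ) := by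
    intro t ht
    rw [mem_TT] at ht
    have hmem : pt3 a b c t ∈ {p : Fin 3 → ℝ | ∃ i j l : ℕ, i + j + l ≤ n ∧ p = ![a i, b j, c l]} :=
      ⟨t.1, t.2.1, t.2.2, ht.1, rfl⟩
    have hne : pt3 a b c t ≠ 0 := by
      intro hzero
      have hcase : 1 ≤ t.1 ∨ 1 ≤ t.2.1 ∨ 1 ≤ t.2.2 := by omega
      rcases hcase with h | h | h
      · have h1 := congrFun hzero 0
        rw [pt3_0] at h1
        have : a 0 < a t.1 := ha 0 t.1 (by omega) (by omega)
        rw [ha0, h1] at this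
        simp at this
      · have h1 := congrFun hzero 1
        rw [pt3_1] at h1
        have : b 0 < b t.2.1 := hb 0 t.2.1 (by omega) (by omega)
        rw [hb0, h1] at this
        simp at this
      · have h1 := congrFun hzero 2
        rw [pt3_2] at h1
        have : c 0 < c t.2.2 := hc 0 t.2.2 (by omega) (by omega)
        rw [hc0, h1] at this
        simp at this
    exact_mod_cast hcov (pt3 a b c t) hmem hne
  -- per-plane weight bound
  have hplane : ∀ P ∈ M, (∑ t ∈ TT n, if IsOnPlane P (pt3 a b c t) then ww n t else 0) ≤ 1 := by
    intro P hP
    obtain ⟨hP1, hP2⟩ := hM P hP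
    rw [← Finset.sum_filter]
    have hfeq : (TT n).filter (fun t => IsOnPlane P (pt3 a b c t)) =
        (TT n).filter (fun t => (P.2⁻¹ * P.1 0) * a t.1 + (P.2⁻¹ * P.1 1) * b t.2.1 +
          (P.2⁻¹ * P.1 2) * c t.2.2 = 1) := by
      apply Finset.filter_congr
      intro t _
      show IsOnPlane P (pt3 a b c t) ↔ _
      rw [IsOnPlane, Fin.sum_univ_three, pt3_0, pt3_1, pt3_2]
      exact onplane_iff P hP2 _ _ _
    rw [hfeq]
    exact plane_sum_le n a b c ha0 hb0 hc0 ha hb hc hgen (fun i => P.2⁻¹ * P.1 i)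
  -- assemble
  have hchain : (31 / 18 * (n : ℝ) - 2) * (k : ℝ) ≤ (Multiset.card M : ℝ) := by
    calc (31 / 18 * (n : ℝ) - 2) * (k : ℝ)
        ≤ (∑ t ∈ TT n, ww n t) * (k : ℝ) :=
          mul_le_mul_of_nonneg_right (by linarith [total_ww n]) (by positivity)
    _ = ∑ t ∈ TT n, ww n t * (k : ℝ) := by rw [Finset.sum_mul]
    _ ≤ ∑ t ∈ TT n, ww n t * (M.countP (fun P => IsOnPlane P (pt3 a b c t)) : ℝ) := by
          apply Finset.sum_le_sum
          intro t ht
          exact mul_le_mul_of_nonneg_left (hcount t ht) (ww_nonneg n t)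
    _ = ∑ t ∈ TT n, (M.map (fun P => if IsOnPlane P (pt3 a b c t) then ww n t else 0)).sum := by
          apply Finset.sum_congr rfl
          intro t _
          rw [multiset_count_eq]
          ring
    _ = (M.map (fun P => ∑ t ∈ TT n, if IsOnPlane P (pt3 a b c t) then ww n t else 0)).sum := by
          rw [multiset_sum_swap]
    _ ≤ (M.map (fun _ => (1 : ℝ))).sum := by
          apply Multiset.sum_map_le_sum_map
          intro P hP
          exact hplane P hP
    _ = (Multiset.card M : ℝ) := by
          rw [show (fun _ : (Fin 3 → ℝ) × ℝ => (1:ℝ)) = Function.const _ (1:ℝ) from rfl,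
             Multiset.map_const]
          simp
  calc 31 / 18 * (n : ℝ) * (k : ℝ) - 2 * (k : ℝ)
      = (31 / 18 * (n : ℝ) - 2) * (k : ℝ) := by ring
  _ ≤ (Multiset.card M : ℝ) := hchain
end

section
/- There exists a constant C > 0 such that for every 3-dimensional half-grid Γ = {(aᵢ, bⱼ, c_l) : i + j + l ≤ n} of order n (given by real numbers 0 = a₀ < a₁ < ⋯ < a_n, 0 = b₀ < b₁ < ⋯ < b_n, 0 = c₀ < c₁ < ⋯ < c_n), there exists a finite multiset of at most (31/18)·n² + C·n planes in ℝ³, none of which passes through the origin, such that every point of Γ ∖ {(0,0,0)} lies on at least n of the planes, counted with multiplicity. -/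
open scoped Classical

namespace StmtTenAux

/-- multiplicity of the coordinate plane `x = a i` (and symmetric versions) -/
def wA (n i : ℕ) : ℕ := (2 * n + 2) / 3 - i

/-- multiplicity of the "two boundary lines" planes -/
def wQ (n i : ℕ) : ℕ :=
  if 2 * i ≤ n then (n + 3 * i + 5) / 6
  else if 3 * i ≤ 2 * n then (i + 1) / 2
  else (4 * n + 5 - 3 * i) / 6

/-- multiplicity of the triple-axis-point planes -/
def wR (n i : ℕ) : ℕ := n - wA n i - 2 * wQ n i

lemma countP_sum {α β : Type*} (p : α → Prop) [DecidablePred p] (s : Finset β)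
    (f : β → Multiset α) :
    (∑ i ∈ s, f i).countP p = ∑ i ∈ s, (f i).countP p := by
  induction s using Finset.cons_induction with
  | empty => simp
  | cons a s ha ih => rw [Finset.sum_cons, Finset.sum_cons, Multiset.countP_add, ih]

lemma card_sum' {α β : Type*} (s : Finset β) (f : β → Multiset α) :
    Multiset.card (∑ i ∈ s, f i) = ∑ i ∈ s, Multiset.card (f i) := by
  induction s using Finset.cons_induction with
  | empty => simp
  | cons a s ha ih => rw [Finset.sum_cons, Finset.sum_cons, Multiset.card_add, ih]

lemma countP_repl {α : Type*} (p : α → Prop) [DecidablePred p] (k : ℕ) (x : α) :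
    (Multiset.replicate k x).countP p = if p x then k else 0 := by
  induction k with
  | zero => simp
  | succ k ih =>
    rw [Multiset.replicate_succ, Multiset.countP_cons, ih]
    split_ifs <;> omega

/-- one family of planes: for each `i ∈ (0, n]`, `w i` copies of the plane `g i` -/
def fam (n : ℕ) (w : ℕ → ℕ) (g : ℕ → (Fin 3 → ℝ) × ℝ) : Multiset ((Fin 3 → ℝ) × ℝ) :=
  ∑ i ∈ Finset.Ioc 0 n, Multiset.replicate (w i) (g i)

lemma le_countP_fam (p : (Fin 3 → ℝ) × ℝ → Prop) [DecidablePred p] (n : ℕ) (w : ℕ → ℕ)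
    (g : ℕ → (Fin 3 → ℝ) × ℝ) {k : ℕ} (hk1 : 0 < k) (hk2 : k ≤ n) (hp : p (g k)) :
    w k ≤ (fam n w g).countP p := by
  rw [fam, countP_sum]
  have h1 : (Multiset.replicate (w k) (g k)).countP p = w k := by
    rw [countP_repl, if_pos hp]
  calc w k = (Multiset.replicate (w k) (g k)).countP p := h1.symm
    _ ≤ _ := Finset.single_le_sum (f := fun i => (Multiset.replicate (w i) (g i)).countP p)
        (fun i _ => Nat.zero_le _) (Finset.mem_Ioc.mpr ⟨hk1, hk2⟩)

lemma mem_fam {P : (Fin 3 → ℝ) × ℝ} {n : ℕ} {w : ℕ → ℕ} {g : ℕ → (Fin 3 → ℝ) × ℝ}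
    (h : P ∈ fam n w g) : ∃ k, 0 < k ∧ k ≤ n ∧ P = g k := by
  rw [fam, Multiset.mem_sum] at h
  obtain ⟨i, hi, hP⟩ := h
  rw [Finset.mem_Ioc] at hi
  exact ⟨i, hi.1, hi.2, Multiset.eq_of_mem_replicate hP⟩

lemma card_fam (n : ℕ) (w : ℕ → ℕ) (g : ℕ → (Fin 3 → ℝ) × ℝ) :
    Multiset.card (fam n w g) = ∑ i ∈ Finset.Ioc 0 n, w i := by
  rw [fam, card_sum']
  simp

/- coverage arithmetic facts -/

lemma factI {n i j l : ℕ} (hi : 0 < i) (hj : 0 < j) (hl : 0 < l) (h : i + j + l ≤ n) :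
    n ≤ wA n i + wA n j + wA n l := by
  simp only [wA]; omega

lemma factF {n i j : ℕ} (hi : 0 < i) (hj : 0 < j) (h : i + j ≤ n) :
    n ≤ wA n i + wA n j + wQ n i + wQ n j := by
  simp only [wA, wQ]; split_ifs <;> omega

lemma factAx (n i : ℕ) : n ≤ wA n i + wQ n i + wQ n i + wR n i := by
  simp only [wR]; omega

/- counting arithmetic facts -/

lemma fact1 {n i : ℕ} (h1 : 0 < i) (h2 : 2 * i ≤ n) :
    36 * (3 * wA n i + 3 * wQ n i + wR n i) + 54 * i ≤ 90 * n + 162 := by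
  simp only [wA, wQ, wR]; split_ifs <;> omega

lemma fact2 {n i : ℕ} (h1 : n < 2 * i) (h2 : 3 * i ≤ 2 * n) :
    36 * (3 * wA n i + 3 * wQ n i + wR n i) + 54 * i ≤ 84 * n + 72 := by
  simp only [wA, wQ, wR]; split_ifs <;> omega

lemma fact3 {n i : ℕ} (h1 : 2 * n < 3 * i) (h2 : i ≤ n) :
    36 * (3 * wA n i + 3 * wQ n i + wR n i) + 18 * i ≤ 60 * n + 66 := by
  simp only [wA, wQ, wR]; split_ifs <;> omega

lemma gaussIoc (a b : ℕ) (hb : a ≤ b) :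
    2 * (∑ i ∈ Finset.Ioc a b, (i : ℤ)) = ((a : ℤ) + b + 1) * ((b : ℤ) - a) := by
  induction b, hb using Nat.le_induction with
  | base => simp
  | succ b hab ih =>
    rw [Finset.sum_Ioc_succ_top hab, mul_add, ih]
    push_cast
    ring

lemma part_bound {lo hi : ℕ} (hlohi : lo ≤ hi) (u : ℕ → ℤ) (A B : ℤ)
    (hterm : ∀ i ∈ Finset.Ioc lo hi, u i + B * (i : ℤ) ≤ A) :
    (∑ i ∈ Finset.Ioc lo hi, u i) ≤
      A * ((hi : ℤ) - lo) - B * (∑ i ∈ Finset.Ioc lo hi, (i : ℤ)) := by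
  have h1 : (∑ i ∈ Finset.Ioc lo hi, u i) ≤
      ∑ i ∈ Finset.Ioc lo hi, (A - B * (i : ℤ)) := by
    refine Finset.sum_le_sum fun i hi => ?_
    have := hterm i hi
    linarith
  have h2 : ∑ i ∈ Finset.Ioc lo hi, (A - B * (i : ℤ)) =
      A * ((hi : ℤ) - lo) - B * (∑ i ∈ Finset.Ioc lo hi, (i : ℤ)) := by
    rw [Finset.sum_sub_distrib, Finset.sum_const, ← Finset.mul_sum, Nat.card_Ioc,
      nsmul_eq_mul, Nat.cast_sub hlohi]
    ring
  linarith

lemma total_bound (n : ℕ) :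
    36 * ((∑ i ∈ Finset.Ioc 0 n, (3 * wA n i + 3 * wQ n i + wR n i) : ℕ) : ℤ) ≤
      62 * (n : ℤ) ^ 2 + 216 * (n : ℤ) := by
  rcases Nat.eq_zero_or_pos n with h0 | hn
  · subst h0; simp
  set p := n / 2 with hpdef
  set k := 2 * n / 3 with hkdef
  have hfacts : 2 * p ≤ n ∧ n ≤ 2 * p + 1 ∧ 3 * k ≤ 2 * n ∧ 2 * n ≤ 3 * k + 2 ∧
      p ≤ k ∧ k ≤ n := by omega
  obtain ⟨f1, f2, f3, f4, f5, f6⟩ := hfacts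
  set u : ℕ → ℤ := fun i => 36 * ((3 * wA n i + 3 * wQ n i + wR n i : ℕ) : ℤ) with hu
  have hsum : 36 * ((∑ i ∈ Finset.Ioc 0 n, (3 * wA n i + 3 * wQ n i + wR n i) : ℕ) : ℤ) =
      ∑ i ∈ Finset.Ioc 0 n, u i := by
    rw [Nat.cast_sum, Finset.mul_sum]
  have hsplit1 : (∑ i ∈ Finset.Ioc 0 p, u i) + (∑ i ∈ Finset.Ioc p k, u i) =
      ∑ i ∈ Finset.Ioc 0 k, u i := Finset.sum_Ioc_consecutive u (Nat.zero_le p) f5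
  have hsplit2 : (∑ i ∈ Finset.Ioc 0 k, u i) + (∑ i ∈ Finset.Ioc k n, u i) =
      ∑ i ∈ Finset.Ioc 0 n, u i := Finset.sum_Ioc_consecutive u (Nat.zero_le k) f6
  have b1 : (∑ i ∈ Finset.Ioc 0 p, u i) ≤
      (90 * (n : ℤ) + 162) * ((p : ℤ) - (0 : ℕ)) - 54 * (∑ i ∈ Finset.Ioc 0 p, (i : ℤ)) := by
    refine part_bound (Nat.zero_le p) u _ 54 fun i hi => ?_
    rw [Finset.mem_Ioc] at hi
    have h2i : 2 * i ≤ n := by omega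
    have := fact1 hi.1 h2i
    rw [hu]
    push_cast
    push_cast at this
    linarith
  have b2 : (∑ i ∈ Finset.Ioc p k, u i) ≤
      (84 * (n : ℤ) + 72) * ((k : ℤ) - (p : ℕ)) - 54 * (∑ i ∈ Finset.Ioc p k, (i : ℤ)) := by
    refine part_bound f5 u _ 54 fun i hi => ?_
    rw [Finset.mem_Ioc] at hi
    have hl : n < 2 * i := by omega
    have hr : 3 * i ≤ 2 * n := by omega
    have := fact2 hl hr
    rw [hu]
    push_cast
    push_cast at this
    linarith
  have b3 : (∑ i ∈ Finset.Ioc k n, u i) ≤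
      (60 * (n : ℤ) + 66) * ((n : ℤ) - (k : ℕ)) - 18 * (∑ i ∈ Finset.Ioc k n, (i : ℤ)) := by
    refine part_bound f6 u _ 18 fun i hi => ?_
    rw [Finset.mem_Ioc] at hi
    have hl : 2 * n < 3 * i := by omega
    have := fact3 hl hi.2
    rw [hu]
    push_cast
    push_cast at this
    linarith
  have g1 := gaussIoc 0 p (Nat.zero_le p)
  have g2 := gaussIoc p k f5
  have g3 := gaussIoc k n f6
  have c1 : 2 * (p : ℤ) ≤ n := by exact_mod_cast f1
  have c2 : (n : ℤ) ≤ 2 * p + 1 := by exact_mod_cast f2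
  have c3 : 3 * (k : ℤ) ≤ 2 * n := by exact_mod_cast f3
  have c4 : 2 * (n : ℤ) ≤ 3 * k + 2 := by exact_mod_cast f4
  have c5 : (p : ℤ) ≤ k := by exact_mod_cast f5
  have c6 : (k : ℤ) ≤ n := by exact_mod_cast f6
  have c7 : (1 : ℤ) ≤ n := by exact_mod_cast hn
  rw [hsum, ← hsplit2, ← hsplit1]
  push_cast at b1 b2 b3 g1 g2 g3
  nlinarith [b1, b2, b3, g1, g2, g3, c1, c2, c3, c4, c5, c6, c7,
    mul_nonneg (sub_nonneg.mpr c5) (sub_nonneg.mpr c6),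
    sq_nonneg ((n : ℤ) - 2 * p), sq_nonneg (2 * (n : ℤ) - 3 * k)]

end StmtTenAux

open StmtTenAux in
theorem stmt_10 :
    ∃ C : ℝ, 0 < C ∧
      ∀ n : ℕ, ∀ a b c : ℕ → ℝ,
        -- 0 = a₀ < a₁ < ⋯ < a_n, 0 = b₀ < b₁ < ⋯ < b_n, 0 = c₀ < c₁ < ⋯ < c_n
        a 0 = 0 → b 0 = 0 → c 0 = 0 →
        (∀ i j : ℕ, i < j → j ≤ n → a i < a j) →
        (∀ i j : ℕ, i < j → j ≤ n → b i < b j) →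
        (∀ i j : ℕ, i < j → j ≤ n → c i < c j) →
        ∃ M : Multiset ((Fin 3 → ℝ) × ℝ),
          -- each element is a plane not passing through the origin
          (∀ P ∈ M, P.1 ≠ 0 ∧ P.2 ≠ 0) ∧
          -- at most (31/18)·n² + C·n planes
          (Multiset.card M : ℝ) ≤ 31 / 18 * (n : ℝ) ^ 2 + C * (n : ℝ) ∧
          -- every point of Γ ∖ {(0,0,0)} lies on at least n planes, with multiplicity
          (∀ i j l : ℕ, i + j + l ≤ n → ¬(i = 0 ∧ j = 0 ∧ l = 0) →
            n ≤ M.countP (fun P => IsOnPlane P ![a i, b j, c l])) := by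
  refine ⟨6, by norm_num, ?_⟩
  intro n a b c ha0 hb0 hc0 ha hb hc
  -- positivity of the grid coordinates
  have hA : ∀ m, 0 < m → m ≤ n → (0 : ℝ) < a m := fun m h1 h2 => by
    rw [← ha0]; exact ha 0 m h1 h2
  have hB : ∀ m, 0 < m → m ≤ n → (0 : ℝ) < b m := fun m h1 h2 => by
    rw [← hb0]; exact hb 0 m h1 h2
  have hC : ∀ m, 0 < m → m ≤ n → (0 : ℝ) < c m := fun m h1 h2 => by
    rw [← hc0]; exact hc 0 m h1 h2
  -- the seven families of planes
  set gX : ℕ → (Fin 3 → ℝ) × ℝ := fun i => (![1, 0, 0], a i) with hgX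
  set gY : ℕ → (Fin 3 → ℝ) × ℝ := fun i => (![0, 1, 0], b i) with hgY
  set gZ : ℕ → (Fin 3 → ℝ) × ℝ := fun i => (![0, 0, 1], c i) with hgZ
  set gXY : ℕ → (Fin 3 → ℝ) × ℝ := fun i => (![(a i)⁻¹, (b i)⁻¹, 0], 1) with hgXY
  set gYZ : ℕ → (Fin 3 → ℝ) × ℝ := fun i => (![0, (b i)⁻¹, (c i)⁻¹], 1) with hgYZ
  set gXZ : ℕ → (Fin 3 → ℝ) × ℝ := fun i => (![(a i)⁻¹, 0, (c i)⁻¹], 1) with hgXZ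
  set gR : ℕ → (Fin 3 → ℝ) × ℝ := fun i => (![(a i)⁻¹, (b i)⁻¹, (c i)⁻¹], 1) with hgR
  set M : Multiset ((Fin 3 → ℝ) × ℝ) :=
    fam n (wA n) gX + fam n (wA n) gY + fam n (wA n) gZ +
    fam n (wQ n) gXY + fam n (wQ n) gYZ + fam n (wQ n) gXZ +
    fam n (wR n) gR with hM
  refine ⟨M, ?_, ?_, ?_⟩
  · -- no plane passes through the origin
    intro P hP
    rw [hM] at hP
    simp only [Multiset.mem_add] at hP
    rcases hP with ((((((h | h) | h) | h) | h) | h) | h) <;>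
      obtain ⟨m, hm1, hm2, rfl⟩ := mem_fam h
    · exact ⟨fun hz => by simpa [hgX] using congrFun hz 0, ne_of_gt (hA m hm1 hm2)⟩
    · exact ⟨fun hz => by simpa [hgY] using congrFun hz 1, ne_of_gt (hB m hm1 hm2)⟩
    · exact ⟨fun hz => by simpa [hgZ] using congrFun hz 2, ne_of_gt (hC m hm1 hm2)⟩
    · exact ⟨fun hz => by
        have := congrFun hz 0
        simp only [hgXY, Matrix.cons_val_zero, Pi.zero_apply] at this
        exact inv_ne_zero (ne_of_gt (hA m hm1 hm2)) this, one_ne_zero⟩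
    · exact ⟨fun hz => by
        have := congrFun hz 1
        simp only [hgYZ, Matrix.cons_val_one, Matrix.head_cons, Pi.zero_apply] at this
        exact inv_ne_zero (ne_of_gt (hB m hm1 hm2)) this, one_ne_zero⟩
    · exact ⟨fun hz => by
        have := congrFun hz 0
        simp only [hgXZ, Matrix.cons_val_zero, Pi.zero_apply] at this
        exact inv_ne_zero (ne_of_gt (hA m hm1 hm2)) this, one_ne_zero⟩
    · exact ⟨fun hz => by
        have := congrFun hz 0
        simp only [hgR, Matrix.cons_val_zero, Pi.zero_apply] at this
        exact inv_ne_zero (ne_of_gt (hA m hm1 hm2)) this, one_ne_zero⟩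
  · -- cardinality bound
    have hcard : Multiset.card M = ∑ i ∈ Finset.Ioc 0 n,
        (3 * wA n i + 3 * wQ n i + wR n i) := by
      rw [hM]
      simp only [Multiset.card_add, card_fam, ← Finset.sum_add_distrib]
      refine Finset.sum_congr rfl fun i _ => ?_
      ring
    have h36 : 36 * ((Multiset.card M : ℕ) : ℤ) ≤ 62 * (n : ℤ) ^ 2 + 216 * (n : ℤ) := by
      rw [hcard]; exact total_bound n
    have h36R : 36 * ((Multiset.card M : ℕ) : ℝ) ≤ 62 * (n : ℝ) ^ 2 + 216 * (n : ℝ) := by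
      exact_mod_cast h36
    linarith
  · -- coverage
    intro i j l hsum hne
    set pt : Fin 3 → ℝ := ![a i, b j, c l] with hpt
    rw [hM]
    simp only [Multiset.countP_add]
    have hin : i ≤ n := by omega
    have hjn : j ≤ n := by omega
    have hln : l ≤ n := by omega
    -- membership proofs for the various planes
    have hpX : IsOnPlane (gX i) pt := by
      simp [hgX, IsOnPlane, Fin.sum_univ_three, hpt]
    have hpY : IsOnPlane (gY j) pt := by
      simp [hgY, IsOnPlane, Fin.sum_univ_three, hpt]
    have hpZ : IsOnPlane (gZ l) pt := by
      simp [hgZ, IsOnPlane, Fin.sum_univ_three, hpt]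
    rcases Nat.eq_zero_or_pos i with hi | hi <;>
      rcases Nat.eq_zero_or_pos j with hj | hj <;>
      rcases Nat.eq_zero_or_pos l with hl | hl
    · exact absurd ⟨hi, hj, hl⟩ hne
    · -- i = 0, j = 0, l > 0 : axis point on z-axis
      subst hi; subst hj
      have h1 : wA n l ≤ (fam n (wA n) gZ).countP (fun P => IsOnPlane P pt) := le_countP_fam (fun P => IsOnPlane P pt) n _ _ hl hln hpZ
      have h2 : wQ n l ≤ (fam n (wQ n) gXZ).countP (fun P => IsOnPlane P pt) := by
        refine le_countP_fam (fun P => IsOnPlane P pt) n _ _ hl hln ?_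
        simp [hgXZ, IsOnPlane, Fin.sum_univ_three, hpt, ha0,
          inv_mul_cancel₀ (ne_of_gt (hC l hl hln))]
      have h3 : wQ n l ≤ (fam n (wQ n) gYZ).countP (fun P => IsOnPlane P pt) := by
        refine le_countP_fam (fun P => IsOnPlane P pt) n _ _ hl hln ?_
        simp [hgYZ, IsOnPlane, Fin.sum_univ_three, hpt, hb0,
          inv_mul_cancel₀ (ne_of_gt (hC l hl hln))]
      have h4 : wR n l ≤ (fam n (wR n) gR).countP (fun P => IsOnPlane P pt) := by
        refine le_countP_fam (fun P => IsOnPlane P pt) n _ _ hl hln ?_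
        simp [hgR, IsOnPlane, Fin.sum_univ_three, hpt, ha0, hb0,
          inv_mul_cancel₀ (ne_of_gt (hC l hl hln))]
      have key := factAx n l
      omega
    · -- i = 0, j > 0, l = 0 : axis point on y-axis
      subst hi; subst hl
      have h1 : wA n j ≤ (fam n (wA n) gY).countP (fun P => IsOnPlane P pt) := le_countP_fam (fun P => IsOnPlane P pt) n _ _ hj hjn hpY
      have h2 : wQ n j ≤ (fam n (wQ n) gXY).countP (fun P => IsOnPlane P pt) := by
        refine le_countP_fam (fun P => IsOnPlane P pt) n _ _ hj hjn ?_
        simp [hgXY, IsOnPlane, Fin.sum_univ_three, hpt, ha0,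
          inv_mul_cancel₀ (ne_of_gt (hB j hj hjn))]
      have h3 : wQ n j ≤ (fam n (wQ n) gYZ).countP (fun P => IsOnPlane P pt) := by
        refine le_countP_fam (fun P => IsOnPlane P pt) n _ _ hj hjn ?_
        simp [hgYZ, IsOnPlane, Fin.sum_univ_three, hpt, hc0,
          inv_mul_cancel₀ (ne_of_gt (hB j hj hjn))]
      have h4 : wR n j ≤ (fam n (wR n) gR).countP (fun P => IsOnPlane P pt) := by
        refine le_countP_fam (fun P => IsOnPlane P pt) n _ _ hj hjn ?_
        simp [hgR, IsOnPlane, Fin.sum_univ_three, hpt, ha0, hc0,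
          inv_mul_cancel₀ (ne_of_gt (hB j hj hjn))]
      have key := factAx n j
      omega
    · -- i = 0, j > 0, l > 0 : face point on x = 0
      subst hi
      have h1 : wA n j ≤ (fam n (wA n) gY).countP (fun P => IsOnPlane P pt) := le_countP_fam (fun P => IsOnPlane P pt) n _ _ hj hjn hpY
      have h2 : wA n l ≤ (fam n (wA n) gZ).countP (fun P => IsOnPlane P pt) := le_countP_fam (fun P => IsOnPlane P pt) n _ _ hl hln hpZ
      have h3 : wQ n j ≤ (fam n (wQ n) gXY).countP (fun P => IsOnPlane P pt) := by
        refine le_countP_fam (fun P => IsOnPlane P pt) n _ _ hj hjn ?_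
        simp [hgXY, IsOnPlane, Fin.sum_univ_three, hpt, ha0,
          inv_mul_cancel₀ (ne_of_gt (hB j hj hjn))]
      have h4 : wQ n l ≤ (fam n (wQ n) gXZ).countP (fun P => IsOnPlane P pt) := by
        refine le_countP_fam (fun P => IsOnPlane P pt) n _ _ hl hln ?_
        simp [hgXZ, IsOnPlane, Fin.sum_univ_three, hpt, ha0,
          inv_mul_cancel₀ (ne_of_gt (hC l hl hln))]
      have key : n ≤ wA n j + wA n l + wQ n j + wQ n l := factF hj hl (by omega)
      omega
    · -- i > 0, j = 0, l = 0 : axis point on x-axis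
      subst hj; subst hl
      have h1 : wA n i ≤ (fam n (wA n) gX).countP (fun P => IsOnPlane P pt) := le_countP_fam (fun P => IsOnPlane P pt) n _ _ hi hin hpX
      have h2 : wQ n i ≤ (fam n (wQ n) gXY).countP (fun P => IsOnPlane P pt) := by
        refine le_countP_fam (fun P => IsOnPlane P pt) n _ _ hi hin ?_
        simp [hgXY, IsOnPlane, Fin.sum_univ_three, hpt, hb0,
          inv_mul_cancel₀ (ne_of_gt (hA i hi hin))]
      have h3 : wQ n i ≤ (fam n (wQ n) gXZ).countP (fun P => IsOnPlane P pt) := by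
        refine le_countP_fam (fun P => IsOnPlane P pt) n _ _ hi hin ?_
        simp [hgXZ, IsOnPlane, Fin.sum_univ_three, hpt, hc0,
          inv_mul_cancel₀ (ne_of_gt (hA i hi hin))]
      have h4 : wR n i ≤ (fam n (wR n) gR).countP (fun P => IsOnPlane P pt) := by
        refine le_countP_fam (fun P => IsOnPlane P pt) n _ _ hi hin ?_
        simp [hgR, IsOnPlane, Fin.sum_univ_three, hpt, hb0, hc0,
          inv_mul_cancel₀ (ne_of_gt (hA i hi hin))]
      have key := factAx n i
      omega
    · -- i > 0, j = 0, l > 0 : face point on y = 0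
      subst hj
      have h1 : wA n i ≤ (fam n (wA n) gX).countP (fun P => IsOnPlane P pt) := le_countP_fam (fun P => IsOnPlane P pt) n _ _ hi hin hpX
      have h2 : wA n l ≤ (fam n (wA n) gZ).countP (fun P => IsOnPlane P pt) := le_countP_fam (fun P => IsOnPlane P pt) n _ _ hl hln hpZ
      have h3 : wQ n i ≤ (fam n (wQ n) gXY).countP (fun P => IsOnPlane P pt) := by
        refine le_countP_fam (fun P => IsOnPlane P pt) n _ _ hi hin ?_
        simp [hgXY, IsOnPlane, Fin.sum_univ_three, hpt, hb0,
          inv_mul_cancel₀ (ne_of_gt (hA i hi hin))]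
      have h4 : wQ n l ≤ (fam n (wQ n) gYZ).countP (fun P => IsOnPlane P pt) := by
        refine le_countP_fam (fun P => IsOnPlane P pt) n _ _ hl hln ?_
        simp [hgYZ, IsOnPlane, Fin.sum_univ_three, hpt, hb0,
          inv_mul_cancel₀ (ne_of_gt (hC l hl hln))]
      have key : n ≤ wA n i + wA n l + wQ n i + wQ n l := factF hi hl (by omega)
      omega
    · -- i > 0, j > 0, l = 0 : face point on z = 0
      subst hl
      have h1 : wA n i ≤ (fam n (wA n) gX).countP (fun P => IsOnPlane P pt) := le_countP_fam (fun P => IsOnPlane P pt) n _ _ hi hin hpX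
      have h2 : wA n j ≤ (fam n (wA n) gY).countP (fun P => IsOnPlane P pt) := le_countP_fam (fun P => IsOnPlane P pt) n _ _ hj hjn hpY
      have h3 : wQ n i ≤ (fam n (wQ n) gXZ).countP (fun P => IsOnPlane P pt) := by
        refine le_countP_fam (fun P => IsOnPlane P pt) n _ _ hi hin ?_
        simp [hgXZ, IsOnPlane, Fin.sum_univ_three, hpt, hc0,
          inv_mul_cancel₀ (ne_of_gt (hA i hi hin))]
      have h4 : wQ n j ≤ (fam n (wQ n) gYZ).countP (fun P => IsOnPlane P pt) := by
        refine le_countP_fam (fun P => IsOnPlane P pt) n _ _ hj hjn ?_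
        simp [hgYZ, IsOnPlane, Fin.sum_univ_three, hpt, hc0,
          inv_mul_cancel₀ (ne_of_gt (hB j hj hjn))]
      have key : n ≤ wA n i + wA n j + wQ n i + wQ n j := factF hi hj (by omega)
      omega
    · -- interior point
      have h1 : wA n i ≤ (fam n (wA n) gX).countP (fun P => IsOnPlane P pt) := le_countP_fam (fun P => IsOnPlane P pt) n _ _ hi hin hpX
      have h2 : wA n j ≤ (fam n (wA n) gY).countP (fun P => IsOnPlane P pt) := le_countP_fam (fun P => IsOnPlane P pt) n _ _ hj hjn hpY
      have h3 : wA n l ≤ (fam n (wA n) gZ).countP (fun P => IsOnPlane P pt) := le_countP_fam (fun P => IsOnPlane P pt) n _ _ hl hln hpZ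
      have key := factI hi hj hl hsum
      omega
end

section
/- Let d ≥ 1 and n ≥ 2 be integers and let Γ = {(x₁, …, x_d) ∈ ℤ^d : xᵢ ≥ 0 for all i, and x₁ + ⋯ + x_d ≤ n − 1} ⊆ ℝ^d be the equally spaced half-grid. Then for every positive integer k, the minimum size of a finite multiset of affine hyperplanes in ℝ^d, none of which contains the origin, such that every point of Γ ∖ {0} lies on at least k of the hyperplanes (counted with multiplicity), is exactly (n − 1)·k. -/
open scoped Classical

/-- `IsOnHyperplane P p` means the point `p : Fin d → ℝ` lies on the affine hyperplane
with coefficients `P = (u, c)`, i.e. on `{x | u ⬝ x = c}`. -/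
def IsOnHyperplane {d : ℕ} (P : (Fin d → ℝ) × ℝ) (p : Fin d → ℝ) : Prop :=
  ∑ i, P.1 i * p i = P.2

/-! The layers `x₁ + ⋯ + x_d = j`, `1 ≤ j ≤ n - 1`, each taken `k` times, cover every nonzero
grid point exactly `k` times. Conversely, the `n - 1` grid points `t e₁`, `1 ≤ t ≤ n - 1`, lie on a
line through the origin, which a hyperplane avoiding the origin meets at most once; so each
hyperplane covers at most one of them, and `k`-fold covering needs `(n - 1) k` hyperplanes. -/

lemma Multiset.sum_countP_le_card {α ι : Type*} (M : Multiset α) (S : Finset ι)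
    (p : ι → α → Prop) [∀ i, DecidablePred (p i)]
    (hp : ∀ a ∈ M, ∀ i ∈ S, ∀ j ∈ S, p i a → p j a → i = j) :
    ∑ i ∈ S, M.countP (p i) ≤ card M := by
  induction M using Multiset.induction_on with
  | empty => simp
  | cons a M ih =>
    have hle : (S.filter fun i => p i a).card ≤ 1 := Finset.card_le_one.2 fun i hi j hj =>
      hp a (mem_cons_self a M) i (Finset.mem_filter.1 hi).1 j (Finset.mem_filter.1 hj).1
        (Finset.mem_filter.1 hi).2 (Finset.mem_filter.1 hj).2
    have ih := ih fun b hb => hp b (mem_cons_of_mem hb)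
    simp only [countP_cons, card_cons, Finset.sum_add_distrib, Finset.sum_boole,
      Nat.cast_id]
    omega

lemma IsOnHyperplane.eq_of_smul {d : ℕ} {P : (Fin d → ℝ) × ℝ} {v : Fin d → ℝ} {s t : ℝ}
    (hs : IsOnHyperplane P (s • v)) (hP : P.2 ≠ 0) (ht : IsOnHyperplane P (t • v)) : s = t := by
  have hline : ∀ r : ℝ, IsOnHyperplane P (r • v) → r * ∑ i, P.1 i * v i = P.2 := by
    intro r hr
    rw [← hr, Finset.mul_sum]
    exact Finset.sum_congr rfl fun i _ => by simp only [Pi.smul_apply, smul_eq_mul]; ring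
  have hc : ∑ i, P.1 i * v i ≠ 0 := fun h0 => hP (by simpa [h0] using (hline s hs).symm)
  exact mul_right_cancel₀ hc ((hline s hs).trans (hline t ht).symm)

lemma sum_countP_isOnHyperplane_smul_le_card {d : ℕ} (M : Multiset ((Fin d → ℝ) × ℝ))
    (hM : ∀ P ∈ M, P.2 ≠ 0) (v : Fin d → ℝ) (T : Finset ℝ) :
    ∑ t ∈ T, M.countP (fun P => IsOnHyperplane P (t • v)) ≤ Multiset.card M :=
  M.sum_countP_le_card T _ fun P hP _ _ _ _ hs ht => hs.eq_of_smul (hM P hP) ht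

def layerHyperplanes (d m : ℕ) : Multiset ((Fin d → ℝ) × ℝ) :=
  (Finset.Icc 1 m).val.map fun j : ℕ => ((1 : Fin d → ℝ), (j : ℝ))

lemma card_layerHyperplanes (d m : ℕ) : Multiset.card (layerHyperplanes d m) = m := by
  simp [layerHyperplanes]

lemma ne_zero_of_mem_layerHyperplanes {d m : ℕ} (hd : 1 ≤ d) {P : (Fin d → ℝ) × ℝ}
    (hP : P ∈ layerHyperplanes d m) : P.1 ≠ 0 ∧ P.2 ≠ 0 := by
  obtain ⟨j, hj, rfl⟩ := Multiset.mem_map.1 hP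
  have : 1 ≤ j := (Finset.mem_Icc.1 hj).1
  have : Nonempty (Fin d) := ⟨⟨0, hd⟩⟩
  exact ⟨one_ne_zero, by simp only [ne_eq, Nat.cast_eq_zero]; omega⟩

lemma countP_layerHyperplanes {d m : ℕ} (x : Fin d → ℕ) (hx : ∑ i, x i ≤ m) (hx0 : x ≠ 0) :
    (layerHyperplanes d m).countP (fun P => IsOnHyperplane P (fun i => (x i : ℝ))) = 1 := by
  have hpos : 1 ≤ ∑ i, x i :=
    Nat.one_le_iff_ne_zero.2 fun h => hx0 (funext fun i => Finset.sum_eq_zero_iff.1 h i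
      (Finset.mem_univ i))
  have hlayer : (Finset.Icc 1 m).filter (fun j : ℕ =>
      IsOnHyperplane ((1 : Fin d → ℝ), (j : ℝ)) (fun i => (x i : ℝ))) = {∑ i, x i} := by
    ext j
    simp only [Finset.mem_filter, Finset.mem_Icc, Finset.mem_singleton, IsOnHyperplane,
      Pi.one_apply, one_mul]
    constructor
    · rintro ⟨-, h⟩
      exact_mod_cast h.symm
    · rintro rfl
      exact ⟨⟨hpos, hx⟩, by push_cast; rfl⟩
  rw [layerHyperplanes, Multiset.countP_map, ← Finset.filter_val, ← Finset.card_def,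
    hlayer, Finset.card_singleton]

theorem stmt_11_general (d n : ℕ) (hd : 1 ≤ d) (k : ℕ) :
    -- (n-1)·k is the minimum size of a multiset of affine hyperplanes, none containing
    -- the origin, covering every point of the equally spaced half-grid Γ ∖ {0}
    -- at least k times with multiplicity
    IsLeast {N : ℕ | ∃ M : Multiset ((Fin d → ℝ) × ℝ),
      (∀ P ∈ M, P.1 ≠ 0 ∧ P.2 ≠ 0) ∧
      (∀ x : Fin d → ℕ, (∑ i, x i) ≤ n - 1 → x ≠ 0 →
        k ≤ M.countP (fun P => IsOnHyperplane P (fun i => (x i : ℝ)))) ∧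
      Multiset.card M = N} ((n - 1) * k) := by
  refine ⟨⟨k • layerHyperplanes d (n - 1), fun P hP =>
      ne_zero_of_mem_layerHyperplanes hd (Multiset.mem_nsmul.1 hP).2, fun x hx hx0 => ?_,
      by rw [Multiset.card_nsmul, card_layerHyperplanes, mul_comm]⟩, ?_⟩
  · rw [Multiset.countP_nsmul, countP_layerHyperplanes x hx hx0, mul_one]
  rintro _ ⟨M, hM, hcover, rfl⟩
  let i₀ : Fin d := ⟨0, hd⟩
  let e : Fin d → ℝ := Pi.single i₀ 1
  have hcover_axis : ∀ t ∈ Finset.Icc 1 (n - 1),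
      k ≤ M.countP (fun P => IsOnHyperplane P ((t : ℝ) • e)) := by
    intro t ht
    have hpoint : (fun i => ((Pi.single i₀ t : Fin d → ℕ) i : ℝ)) = (t : ℝ) • e := by
      ext i; by_cases hi : i = i₀ <;> simp [e, hi]
    rw [← hpoint]
    exact hcover _ (by simpa using (Finset.mem_Icc.1 ht).2)
      (by simpa using Nat.one_le_iff_ne_zero.1 (Finset.mem_Icc.1 ht).1)
  calc (n - 1) * k = ∑ t ∈ Finset.Icc 1 (n - 1), k := by simp [mul_comm]
    _ ≤ ∑ t ∈ Finset.Icc 1 (n - 1), M.countP (fun P => IsOnHyperplane P ((t : ℝ) • e)) :=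
      Finset.sum_le_sum hcover_axis
    _ = ∑ t ∈ (Finset.Icc 1 (n - 1)).image (Nat.cast : ℕ → ℝ),
          M.countP (fun P => IsOnHyperplane P (t • e)) :=
      (Finset.sum_image (f := fun t : ℝ => M.countP fun P => IsOnHyperplane P (t • e))
        fun _ _ _ _ h => Nat.cast_injective h).symm
    _ ≤ Multiset.card M :=
      sum_countP_isOnHyperplane_smul_le_card M (fun P hP => (hM P hP).2) e _

theorem stmt_11 (d n : ℕ) (hd : 1 ≤ d) (hn : 2 ≤ n) (k : ℕ) (hk : 0 < k) :
    -- (n-1)·k is the minimum size of a multiset of affine hyperplanes, none containing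
    -- the origin, covering every point of the equally spaced half-grid Γ ∖ {0}
    -- at least k times with multiplicity
    IsLeast {N : ℕ | ∃ M : Multiset ((Fin d → ℝ) × ℝ),
      (∀ P ∈ M, P.1 ≠ 0 ∧ P.2 ≠ 0) ∧
      (∀ x : Fin d → ℕ, (∑ i, x i) ≤ n - 1 → x ≠ 0 →
        k ≤ M.countP (fun P => IsOnHyperplane P (fun i => (x i : ℝ)))) ∧
      Multiset.card M = N} ((n - 1) * k) :=
  stmt_11_general d n hd k
end

section
/- Let n ≥ 4 and let ℋ = {(aᵢ, bⱼ) : i + j ≤ n − 1} be an n × n half-grid in ℝ² given by sets {a₀ < a₁ < ⋯ < a_{n−1}} and {b₀ < b₁ < ⋯ < b_{n−1}}, with vertex V = (a₀, b₀), and suppose that every line in ℝ² that is not parallel to the x-axis or y-axis passes through at most 2 points of ℋ. Define a weight function w on ℋ ∖ {V} by: w(P) = k/2 if P lies on the line x = a₀, or on the line y = b₀, or P = (aᵢ, b_{n−1−i}) for some 1 ≤ i ≤ n − 2; and w(P) = 0 otherwise. Then for every line ℓ in ℝ² not passing through V, the sum of w over the points of (ℋ ∖ {V}) ∩ ℓ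 is at most k, and the total sum of w over all points of ℋ ∖ {V} equals (3nk)/2 − 2k. -/
open scoped Classical

theorem stmt_12 (n : ℕ) (hn : 4 ≤ n) (a b : ℕ → ℝ)
    -- a₀ < a₁ < ⋯ < a_{n-1} and b₀ < b₁ < ⋯ < b_{n-1}
    (ha : ∀ i j : ℕ, i < j → j < n → a i < a j)
    (hb : ∀ i j : ℕ, i < j → j < n → b i < b j)
    -- the n × n half-grid ℋ = {(aᵢ, bⱼ) : i + j ≤ n - 1}
    (H : Finset (ℝ × ℝ))
    (hH : H = ((Finset.range n ×ˢ Finset.range n).filter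
      (fun q => q.1 + q.2 ≤ n - 1)).image (fun q => (a q.1, b q.2)))
    -- genericity: every line not parallel to the x-axis or y-axis passes through
    -- at most 2 points of ℋ
    (hgen : ∀ u v c : ℝ, u ≠ 0 → v ≠ 0 →
      (H.filter (fun p => u * p.1 + v * p.2 = c)).card ≤ 2)
    (k : ℕ) (hk : 0 < k)
    -- the weight function w on ℋ ∖ {V}: weight k/2 on points of the lines x = a₀ and
    -- y = b₀ and on the points (aᵢ, b_{n-1-i}) for 1 ≤ i ≤ n - 2, weight 0 elsewhere
    (w : ℝ × ℝ → ℝ)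
    (hw : ∀ i j : ℕ, i + j ≤ n - 1 → ¬(i = 0 ∧ j = 0) →
      w (a i, b j) =
        if i = 0 ∨ j = 0 ∨ (i + j = n - 1 ∧ 1 ≤ i ∧ i ≤ n - 2) then (k : ℝ) / 2 else 0) :
    -- the sum of w over the points of (ℋ ∖ {V}) on any line not through V is at most k,
    -- and the total sum of w over ℋ ∖ {V} is (3nk)/2 − 2k
    (∀ u v c : ℝ, (u, v) ≠ ((0 : ℝ), (0 : ℝ)) → ¬(u * a 0 + v * b 0 = c) →
      ∑ p ∈ (H.erase (a 0, b 0)).filter (fun p => u * p.1 + v * p.2 = c), w p ≤ (k : ℝ)) ∧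
    ∑ p ∈ H.erase (a 0, b 0), w p = 3 * (n : ℝ) * (k : ℝ) / 2 - 2 * (k : ℝ) := by
  classical
  set f : ℕ × ℕ → ℝ × ℝ := fun q => (a q.1, b q.2) with hf
  set I : Finset (ℕ × ℕ) := (Finset.range n ×ˢ Finset.range n).filter
      (fun q => q.1 + q.2 ≤ n - 1) with hIdef
  set cond : ℕ × ℕ → Prop :=
    fun q => q.1 = 0 ∨ q.2 = 0 ∨ (q.1 + q.2 = n - 1 ∧ 1 ≤ q.1 ∧ q.1 ≤ n - 2) with hcond
  have hinja : ∀ i j, i < n → j < n → a i = a j → i = j := by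
    intro i j hi hj h
    rcases lt_trichotomy i j with h' | h' | h'
    · exact absurd h (ne_of_lt (ha _ _ h' hj))
    · exact h'
    · exact absurd h.symm (ne_of_lt (ha _ _ h' hi))
  have hinjb : ∀ i j, i < n → j < n → b i = b j → i = j := by
    intro i j hi hj h
    rcases lt_trichotomy i j with h' | h' | h'
    · exact absurd h (ne_of_lt (hb _ _ h' hj))
    · exact h'
    · exact absurd h.symm (ne_of_lt (hb _ _ h' hi))
  have hmem : ∀ q : ℕ × ℕ, q ∈ I ↔ q.1 < n ∧ q.2 < n ∧ q.1 + q.2 ≤ n - 1 := by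
    intro q
    simp [hIdef, Finset.mem_filter, Finset.mem_product, Finset.mem_range, and_assoc]
  have hfi : ∀ q ∈ I, ∀ q' ∈ I, f q = f q' → q = q' := by
    intro q hq q' hq' h
    rw [hmem] at hq hq'
    rw [Prod.ext_iff] at h ⊢
    exact ⟨hinja _ _ hq.1 hq'.1 h.1, hinjb _ _ hq.2.1 hq'.2.1 h.2⟩
  have h00 : ((0 : ℕ), (0 : ℕ)) ∈ I := by
    rw [hmem]; omega
  have hHe : H.erase (a 0, b 0) = (I.erase ((0 : ℕ), (0 : ℕ))).image f := by
    ext p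
    simp only [Finset.mem_erase, hH, Finset.mem_image]
    constructor
    · rintro ⟨hp, q, hq, rfl⟩
      exact ⟨q, ⟨fun h => hp (by rw [h]), hq⟩, rfl⟩
    · rintro ⟨q, ⟨hne, hq⟩, rfl⟩
      refine ⟨fun h => hne ?_, q, hq, rfl⟩
      exact hfi q hq (0, 0) h00 h
  -- generic sum computation
  have hsum : ∀ T : Finset (ℕ × ℕ), T ⊆ I.erase ((0 : ℕ), (0 : ℕ)) →
      ∑ p ∈ T.image f, w p = ((T.filter cond).card : ℝ) * ((k : ℝ) / 2) := by
    intro T hT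
    rw [Finset.sum_image (fun q hq q' hq' h =>
      hfi q (Finset.mem_of_mem_erase (hT hq)) q' (Finset.mem_of_mem_erase (hT hq')) h)]
    have : ∀ q ∈ T, w (f q) = if cond q then (k : ℝ) / 2 else 0 := by
      intro q hq
      obtain ⟨hne, hqI⟩ := Finset.mem_erase.mp (hT hq)
      rw [hmem] at hqI
      have := hw q.1 q.2 hqI.2.2 (by
        rintro ⟨h1, h2⟩; exact hne (Prod.ext_iff.mpr ⟨h1, h2⟩))
      simpa [hf, hcond] using this
    rw [Finset.sum_congr rfl this, ← Finset.sum_filter, Finset.sum_const, nsmul_eq_mul]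
  constructor
  · -- per-line bound
    intro u v c huv hV
    rw [hHe, Finset.filter_image]
    set T : Finset (ℕ × ℕ) := (I.erase ((0 : ℕ), (0 : ℕ))).filter
      (fun q => u * (f q).1 + v * (f q).2 = c) with hTdef
    rw [hsum T (Finset.filter_subset _ _)]
    have hcard : (T.filter cond).card ≤ 2 := by
      by_cases hu : u = 0
      · -- horizontal line, v ≠ 0
        have hv : v ≠ 0 := by
          intro hv; exact huv (by rw [hu, hv])
        have key : ∀ q ∈ T.filter cond, q.1 < n ∧ q.2 < n ∧ q.1 + q.2 ≤ n - 1 ∧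
            q.2 ≠ 0 ∧ (q.1 = 0 ∨ q.1 + q.2 = n - 1) ∧ b q.2 = c / v := by
          intro q hq
          obtain ⟨hqT, hc⟩ := Finset.mem_filter.mp hq
          obtain ⟨hqI', hline⟩ := Finset.mem_filter.mp hqT
          obtain ⟨hne, hqI⟩ := Finset.mem_erase.mp hqI'
          rw [hmem] at hqI
          have hline' : v * b q.2 = c := by
            rw [hu] at hline; simpa [hf] using hline
          have hbq : b q.2 = c / v := by
            rw [eq_div_iff hv]; linarith
          have hq2 : q.2 ≠ 0 := by
            intro h
            apply hV
            rw [hu, ← h, hbq]; field_simp; ring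
          refine ⟨hqI.1, hqI.2.1, hqI.2.2, hq2, ?_, hbq⟩
          rcases hc with h | h | h
          · exact Or.inl h
          · exact absurd h hq2
          · exact Or.inr h.1
        have hle : (T.filter cond).card ≤ ({0, 1} : Finset ℕ).card := by
          apply Finset.card_le_card_of_injOn (fun q : ℕ × ℕ => if q.1 = 0 then 0 else 1)
          · intro q _; dsimp only; split <;> simp
          · intro q hq q' hq' hgq
            obtain ⟨h1, h2, h3, h4, h5, h6⟩ := key q (by simpa using hq)
            obtain ⟨h1', h2', h3', h4', h5', h6'⟩ := key q' (by simpa using hq')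
            have hb2 : q.2 = q'.2 := hinjb _ _ h2 h2' (h6.trans h6'.symm)
            simp only at hgq
            have : q.1 = q'.1 := by
              by_cases hz : q.1 = 0 <;> by_cases hz' : q'.1 = 0
              · omega
              · simp [hz, hz'] at hgq
              · simp [hz, hz'] at hgq
              · rcases h5 with h5 | h5
                · exact absurd h5 hz
                rcases h5' with h5' | h5'
                · exact absurd h5' hz'
                omega
            exact Prod.ext_iff.mpr ⟨this, hb2⟩
        simpa using hle
      · by_cases hv : v = 0
        · -- vertical line, u ≠ 0
          have key : ∀ q ∈ T.filter cond, q.1 < n ∧ q.2 < n ∧ q.1 + q.2 ≤ n - 1 ∧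
              q.1 ≠ 0 ∧ (q.2 = 0 ∨ q.1 + q.2 = n - 1) ∧ a q.1 = c / u := by
            intro q hq
            obtain ⟨hqT, hc⟩ := Finset.mem_filter.mp hq
            obtain ⟨hqI', hline⟩ := Finset.mem_filter.mp hqT
            obtain ⟨hne, hqI⟩ := Finset.mem_erase.mp hqI'
            rw [hmem] at hqI
            have hline' : u * a q.1 = c := by
              rw [hv] at hline; simpa [hf] using hline
            have haq : a q.1 = c / u := by
              rw [eq_div_iff hu]; linarith
            have hq1 : q.1 ≠ 0 := by
              intro h
              apply hV
              rw [hv, ← h, haq]; field_simp; ring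
            refine ⟨hqI.1, hqI.2.1, hqI.2.2, hq1, ?_, haq⟩
            rcases hc with h | h | h
            · exact absurd h hq1
            · exact Or.inl h
            · exact Or.inr h.1
          have hle : (T.filter cond).card ≤ ({0, 1} : Finset ℕ).card := by
            apply Finset.card_le_card_of_injOn (fun q : ℕ × ℕ => if q.2 = 0 then 0 else 1)
            · intro q _; dsimp only; split <;> simp
            · intro q hq q' hq' hgq
              obtain ⟨h1, h2, h3, h4, h5, h6⟩ := key q (by simpa using hq)
              obtain ⟨h1', h2', h3', h4', h5', h6'⟩ := key q' (by simpa using hq')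
              have ha1 : q.1 = q'.1 := hinja _ _ h1 h1' (h6.trans h6'.symm)
              simp only at hgq
              have : q.2 = q'.2 := by
                by_cases hz : q.2 = 0 <;> by_cases hz' : q'.2 = 0
                · omega
                · simp [hz, hz'] at hgq
                · simp [hz, hz'] at hgq
                · rcases h5 with h5 | h5
                  · exact absurd h5 hz
                  rcases h5' with h5' | h5'
                  · exact absurd h5' hz'
                  omega
              exact Prod.ext_iff.mpr ⟨ha1, this⟩
          simpa using hle
        · -- oblique line: use genericity
          have himg : (T.filter cond).image f ⊆ H.filter (fun p => u * p.1 + v * p.2 = c) := by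
            intro p hp
            obtain ⟨q, hq, rfl⟩ := Finset.mem_image.mp hp
            obtain ⟨hqT, _⟩ := Finset.mem_filter.mp hq
            obtain ⟨hqI', hline⟩ := Finset.mem_filter.mp hqT
            refine Finset.mem_filter.mpr ⟨?_, hline⟩
            rw [hH]
            exact Finset.mem_image_of_mem f (Finset.mem_of_mem_erase hqI')
          calc (T.filter cond).card = ((T.filter cond).image f).card := by
                rw [Finset.card_image_of_injOn (fun q hq q' hq' h =>
                  hfi q (Finset.mem_of_mem_erase ((Finset.filter_subset _ _)
                    ((Finset.filter_subset _ _) hq)))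
                    q' (Finset.mem_of_mem_erase ((Finset.filter_subset _ _)
                    ((Finset.filter_subset _ _) hq'))) h)]
            _ ≤ _ := Finset.card_le_card himg
            _ ≤ 2 := hgen u v c hu hv
    have h2 : ((T.filter cond).card : ℝ) ≤ 2 := by exact_mod_cast hcard
    have hk0 : (0 : ℝ) ≤ (k : ℝ) / 2 := by positivity
    calc ((T.filter cond).card : ℝ) * ((k : ℝ) / 2) ≤ 2 * ((k : ℝ) / 2) :=
          mul_le_mul_of_nonneg_right h2 hk0
      _ = k := by ring
  · -- total sum
    rw [hHe, hsum _ (Finset.Subset.refl _)]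
    have hset : (I.erase ((0 : ℕ), (0 : ℕ))).filter cond =
        ((Finset.Icc 1 (n - 1)).image (fun j => ((0 : ℕ), j))) ∪
        ((Finset.Icc 1 (n - 1)).image (fun i => (i, (0 : ℕ)))) ∪
        ((Finset.Icc 1 (n - 2)).image (fun i => (i, n - 1 - i))) := by
      ext q
      simp only [Finset.mem_filter, Finset.mem_erase, hmem, Finset.mem_union,
        Finset.mem_image, Finset.mem_Icc, hcond, Prod.ext_iff, Prod.mk.injEq, ne_eq]
      constructor
      · rintro ⟨⟨hne, h1, h2, h3⟩, hc⟩
        rcases hc with h | h | h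
        · exact Or.inl (Or.inl ⟨q.2, by omega, by omega⟩)
        · exact Or.inl (Or.inr ⟨q.1, by omega, by omega⟩)
        · exact Or.inr ⟨q.1, by omega, by omega⟩
      · rintro (⟨j, hj, h1, h2⟩ | ⟨i, hi, h1, h2⟩ | ⟨i, hi, h1, h2⟩) <;>
          refine ⟨⟨?_, ?_, ?_, ?_⟩, ?_⟩ <;> omega
    have hcard : ((I.erase ((0 : ℕ), (0 : ℕ))).filter cond).card = 3 * n - 4 := by
      rw [hset]
      rw [Finset.card_union_of_disjoint, Finset.card_union_of_disjoint]
      · rw [Finset.card_image_of_injective _ (fun x y h => congrArg Prod.snd h),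
          Finset.card_image_of_injective _ (fun x y (h : (⟨x, n-1-x⟩ : ℕ × ℕ) = ⟨y, n-1-y⟩) => congrArg Prod.fst h),
          Finset.card_image_of_injective _ (fun x y (h : (⟨x, 0⟩ : ℕ × ℕ) = ⟨y, 0⟩) => congrArg Prod.fst h)]
        rw [Nat.card_Icc, Nat.card_Icc]
        omega
      · simp only [Finset.disjoint_left, Finset.mem_image, Finset.mem_Icc, Prod.ext_iff]
        rintro q ⟨j, hj, h1, h2⟩ ⟨i, hi, h1', h2'⟩
        omega
      · simp only [Finset.disjoint_left, Finset.mem_union, Finset.mem_image,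
          Finset.mem_Icc, Prod.ext_iff]
        rintro q (⟨j, hj, h1, h2⟩ | ⟨i, hi, h1, h2⟩) ⟨i', hi', h1', h2'⟩ <;> omega
    rw [hcard]
    have : ((3 * n - 4 : ℕ) : ℝ) = 3 * (n : ℝ) - 4 := by
      have : 4 ≤ 3 * n := by omega
      push_cast [Nat.cast_sub this]
      ring
    rw [this]
    ring
end
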